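/- arXiv:2010.04239 — 5 statements merged into one kernel-verified Lean document; each statement's English description precedes it below -/
import Mathlib

section
/- Let X be a finite alphabet, φ : X → [0,∞) a cost function, and A ≥ 0 such that there exists a probability mass function p on X with ∑_x p(x)φ(x) ≤ A. Then for every n ≥ 1, |{x^n ∈ X^n : (1/n)∑_{t=1}^n φ(x_t) ≤ A}| ≤ (n+1)^{|X|} · 2^{n C}, where C = max{ H(p) : p a probability mass function on X with ∑_x p(x)φ(x) ≤ A }. -/
open Finset

lemma rpow_sum_aux {ι : Type*} (s : Finset ι) (f : ι → ℝ) :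
    (2:ℝ) ^ (∑ a ∈ s, f a) = ∏ a ∈ s, (2:ℝ) ^ (f a) := by
  induction s using Finset.cons_induction with
  | empty => simp
  | cons a s ha ih => rw [Finset.sum_cons, Finset.prod_cons, Real.rpow_add (by norm_num), ih]

lemma sum_count_aux {X : Type*} [Fintype X] [DecidableEq X] {n : ℕ} (x : Fin n → X) (g : X → ℝ) :
    ∑ t, g (x t) = ∑ a, ((univ.filter (fun t => x t = a)).card : ℝ) * g a := by
  rw [← Finset.sum_fiberwise_of_maps_to (fun t _ => mem_univ (x t)) (fun t => g (x t))]
  refine Finset.sum_congr rfl fun a _ => ?_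
  rw [Finset.sum_congr rfl (fun t ht => by rw [(mem_filter.mp ht).2]), Finset.sum_const,
    nsmul_eq_mul]

lemma prod_count_aux {X : Type*} [Fintype X] [DecidableEq X] {n : ℕ} (x : Fin n → X) (f : X → ℝ) :
    ∏ t, f (x t) = ∏ a, f a ^ ((univ.filter (fun t => x t = a)).card) := by
  rw [← Finset.prod_fiberwise_of_maps_to (fun t _ => mem_univ (x t)) (fun t => f (x t))]
  refine Finset.prod_congr rfl fun a _ => ?_
  rw [Finset.prod_congr rfl (fun t ht => by rw [(mem_filter.mp ht).2]), Finset.prod_const]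

lemma count_sum_aux {X : Type*} [Fintype X] [DecidableEq X] {n : ℕ} (x : Fin n → X) :
    ∑ a, (univ.filter (fun t => x t = a)).card = n := by
  rw [← Finset.card_eq_sum_card_fiberwise (fun t (_ : t ∈ univ) => mem_univ (x t))]
  simp

/-- Shannon entropy (base 2) of a probability mass function on a finite alphabet,
with the convention `0 · log₂ 0 = 0` (automatic since `Real.logb 2 0 = 0`). -/
noncomputable def shannonEntropy {X : Type*} [Fintype X] (p : X → ℝ) : ℝ :=
  -∑ x, p x * Real.logb 2 (p x)

lemma type_sum_one {X : Type*} [Fintype X] [DecidableEq X] {n : ℕ} (hn : 1 ≤ n)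
    (x0 : Fin n → X) :
    ∑ a, ((univ.filter (fun t => x0 t = a)).card : ℝ) / n = 1 := by
  have hn' : (0:ℝ) < n := by exact_mod_cast Nat.lt_of_lt_of_le Nat.zero_lt_one hn
  rw [← Finset.sum_div]
  rw [show ∑ a, ((univ.filter (fun t => x0 t = a)).card : ℝ) = (n : ℝ) by
    exact_mod_cast congrArg (Nat.cast : ℕ → ℝ) (count_sum_aux x0)]
  field_simp

lemma typeclass_card_le' {X : Type*} [Fintype X] [DecidableEq X] {n : ℕ} (hn : 1 ≤ n)
    (x0 : Fin n → X) (T : Finset (Fin n → X))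
    (hT : ∀ y ∈ T, ∀ a, (univ.filter (fun t => y t = a)).card
        = (univ.filter (fun t => x0 t = a)).card) :
    (T.card : ℝ) ≤ 2 ^ ((n:ℝ) *
      shannonEntropy (fun a => ((univ.filter (fun t => x0 t = a)).card : ℝ) / n)) := by
  have hn' : (0:ℝ) < n := by exact_mod_cast Nat.lt_of_lt_of_le Nat.zero_lt_one hn
  set k : X → ℕ := fun a => (univ.filter (fun t => x0 t = a)).card with hk
  set p : X → ℝ := fun a => (k a : ℝ) / n with hp
  have hp0 : ∀ a, 0 ≤ p a := fun a => by positivity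
  have hkp : ∀ a, (k a : ℝ) = n * p a := fun a => by
    show (k a : ℝ) = n * ((k a : ℝ) / n); field_simp [hn'.ne']
  set H : ℝ := shannonEntropy p with hH
  have key : ∀ y ∈ T, ∏ t, p (y t) = 2 ^ (-((n:ℝ) * H)) := by
    intro y hy
    rw [prod_count_aux y p]
    have h1 : ∀ a, p a ^ ((univ.filter (fun t => y t = a)).card)
        = (2:ℝ) ^ ((k a : ℝ) * Real.logb 2 (p a)) := by
      intro a
      rw [hT y hy a]
      rcases Nat.eq_zero_or_pos (k a) with h0 | hpos
      · simp [hk ▸ h0, h0]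
      · have hpa : 0 < p a := by
          show (0:ℝ) < (k a : ℝ) / n; exact div_pos (by exact_mod_cast hpos) hn'
        rw [mul_comm ((k a : ℝ)), Real.rpow_mul (by norm_num : (0:ℝ) ≤ 2),
          Real.rpow_logb (by norm_num) (by norm_num) hpa, Real.rpow_natCast]
    calc ∏ a, p a ^ ((univ.filter (fun t => y t = a)).card)
        = ∏ a, (2:ℝ) ^ ((k a : ℝ) * Real.logb 2 (p a)) := Finset.prod_congr rfl fun a _ => h1 a
      _ = 2 ^ (∑ a, (k a : ℝ) * Real.logb 2 (p a)) := (rpow_sum_aux _ _).symm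
      _ = 2 ^ (-((n:ℝ) * H)) := by
          congr 1
          have : ∑ a, (k a : ℝ) * Real.logb 2 (p a)
              = (n:ℝ) * ∑ a, p a * Real.logb 2 (p a) := by
            rw [Finset.mul_sum]
            exact Finset.sum_congr rfl fun a _ => by rw [hkp a, mul_assoc]
          rw [this, hH, shannonEntropy]
          ring
  have hsum1 : ∑ a, p a = 1 := type_sum_one hn x0
  have hbound : (T.card : ℝ) * 2 ^ (-((n:ℝ) * H)) ≤ 1 := by
    calc (T.card : ℝ) * 2 ^ (-((n:ℝ) * H))
        = ∑ y ∈ T, ∏ t, p (y t) := by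
          rw [Finset.sum_congr rfl key, Finset.sum_const, nsmul_eq_mul]
      _ ≤ ∑ y : Fin n → X, ∏ t, p (y t) := by
          apply Finset.sum_le_sum_of_subset_of_nonneg (Finset.subset_univ T)
          intro y _ _
          exact Finset.prod_nonneg fun t _ => hp0 _
      _ = ∏ _t : Fin n, ∑ a, p a := by
          rw [Finset.prod_univ_sum (fun _ => (univ : Finset X)) (fun _ b => p b)]
          rw [Fintype.piFinset_univ]
      _ = 1 := by rw [hsum1]; simp
  have := mul_le_mul_of_nonneg_right hbound
    (le_of_lt (Real.rpow_pos_of_pos (by norm_num : (0:ℝ)<2) ((n:ℝ)*H)))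
  calc (T.card : ℝ) = (T.card : ℝ) * (2 ^ (-((n:ℝ) * H)) * 2 ^ ((n:ℝ) * H)) := by
        rw [← Real.rpow_add (by norm_num), neg_add_cancel, Real.rpow_zero, mul_one]
    _ = (T.card : ℝ) * 2 ^ (-((n:ℝ) * H)) * 2 ^ ((n:ℝ) * H) := by ring
    _ ≤ 1 * 2 ^ ((n:ℝ) * H) := this
    _ = 2 ^ ((n:ℝ) * H) := one_mul _

/-- The number of sequences in `X^n` satisfying the average input-cost constraint `A` is at most
`(n+1)^{|X|} · 2^{nC}`, where `C` is the maximal entropy of a pmf on `X` with expected cost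
at most `A`. -/
theorem constraint_set_card_le
    {X : Type*} [Fintype X]
    (φ : X → ℝ) (hφ : ∀ x, 0 ≤ φ x) (A : ℝ) (hA : 0 ≤ A)
    (C : ℝ)
    (hC : IsGreatest { h : ℝ | ∃ p : X → ℝ, (∀ x, 0 ≤ p x) ∧ (∑ x, p x = 1) ∧
        (∑ x, p x * φ x ≤ A) ∧ h = shannonEntropy p } C)
    (n : ℕ) (hn : 1 ≤ n) :
    ({x : Fin n → X | (∑ t, φ (x t)) / n ≤ A}.ncard : ℝ) ≤
      ((n : ℝ) + 1) ^ (Fintype.card X) * (2 : ℝ) ^ ((n : ℝ) * C) := by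
  classical
  have hn' : (0:ℝ) < n := by exact_mod_cast Nat.lt_of_lt_of_le Nat.zero_lt_one hn
  set S : Finset (Fin n → X) := univ.filter (fun x => (∑ t, φ (x t)) / n ≤ A) with hSdef
  have hSset : {x : Fin n → X | (∑ t, φ (x t)) / n ≤ A} = ↑S := by
    ext x; simp [hSdef]
  rw [hSset, Set.ncard_coe_finset]
  -- count-vector map into X → Fin (n+1)
  have hcnt_le : ∀ (x : Fin n → X) (a : X),
      (univ.filter (fun t => x t = a)).card < n + 1 := by
    intro x a
    exact Nat.lt_succ_of_le (le_trans (Finset.card_filter_le _ _) (by simp))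
  set cntv : (Fin n → X) → (X → Fin (n+1)) :=
    fun x a => ⟨(univ.filter (fun t => x t = a)).card, hcnt_le x a⟩ with hcntv
  have hcard : S.card = ∑ c : X → Fin (n+1), (S.filter (fun x => cntv x = c)).card :=
    Finset.card_eq_sum_card_fiberwise (fun x _ => mem_univ _)
  -- per-fiber bound
  have hfiber : ∀ c : X → Fin (n+1),
      ((S.filter (fun x => cntv x = c)).card : ℝ) ≤ 2 ^ ((n:ℝ) * C) := by
    intro c
    rcases (S.filter (fun x => cntv x = c)).eq_empty_or_nonempty with he | ⟨x0, hx0⟩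
    · rw [he]
      simpa using le_of_lt (Real.rpow_pos_of_pos (by norm_num : (0:ℝ)<2) _)
    · have hx0S : x0 ∈ S := (Finset.mem_filter.mp hx0).1
      have hx0c : cntv x0 = c := (Finset.mem_filter.mp hx0).2
      set p : X → ℝ := fun a => ((univ.filter (fun t => x0 t = a)).card : ℝ) / n with hp
      have hT : ∀ y ∈ S.filter (fun x => cntv x = c), ∀ a,
          (univ.filter (fun t => y t = a)).card = (univ.filter (fun t => x0 t = a)).card := by
        intro y hy a
        have hyc : cntv y = c := (Finset.mem_filter.mp hy).2
        have := congrFun (hyc.trans hx0c.symm) a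
        simpa [hcntv, Fin.mk.injEq] using this
      have h1 := typeclass_card_le' hn x0 _ hT
      -- p is a pmf with cost ≤ A, so its entropy ≤ C
      have hcost : ∑ a, p a * φ a ≤ A := by
        have hx0A : (∑ t, φ (x0 t)) / n ≤ A := by
          simpa [hSdef] using hx0S
        have : ∑ a, p a * φ a = (∑ t, φ (x0 t)) / n := by
          rw [sum_count_aux x0 φ, Finset.sum_div]
          exact Finset.sum_congr rfl fun a _ => by rw [hp]; ring
        rw [this]; exact hx0A
      have hHC : shannonEntropy p ≤ C :=
        hC.2 ⟨p, fun a => by rw [hp]; positivity, type_sum_one hn x0, hcost, rfl⟩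
      calc ((S.filter (fun x => cntv x = c)).card : ℝ)
          ≤ 2 ^ ((n:ℝ) * shannonEntropy p) := h1
        _ ≤ 2 ^ ((n:ℝ) * C) := by
            apply Real.rpow_le_rpow_of_exponent_le (by norm_num)
            exact mul_le_mul_of_nonneg_left hHC (le_of_lt hn')
  calc (S.card : ℝ) = ∑ c : X → Fin (n+1), ((S.filter (fun x => cntv x = c)).card : ℝ) := by
        rw [hcard]; push_cast; ring
    _ ≤ ∑ _c : X → Fin (n+1), (2:ℝ) ^ ((n:ℝ) * C) :=
        Finset.sum_le_sum fun c _ => hfiber c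
    _ = (Fintype.card (X → Fin (n+1)) : ℝ) * 2 ^ ((n:ℝ) * C) := by
        rw [Finset.sum_const, nsmul_eq_mul, Finset.card_univ]
    _ = ((n : ℝ) + 1) ^ (Fintype.card X) * (2 : ℝ) ^ ((n : ℝ) * C) := by
        rw [Fintype.card_fun, Fintype.card_fin]
        push_cast; ring
end

section
/- Let W be a DMC with finite alphabets X, Y, let φ : X → [0,∞) be a cost function and A ≥ 0 such that the constraint set of distributions is nonempty, and set C = max{ H(p) : p a pmf on X with ∑_x p(x)φ(x) ≤ A }. If u_1,…,u_M ∈ X^n satisfy (1/n)∑_{t=1}^n φ(u_i(t)) ≤ A for all i, and D_1,…,D_M ⊆ Y^n satisfy W^n(D_i^c | u_i) ≤ λ1 for all i and W^n(D_j | u_i) ≤ λ2 for all i ≠ j, with λ1 + λ2 < 1, then log₂ M ≤ n·C + |X|·log₂(n+1). -/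
open Finset

/-- The probability `W^n(D | x^n)` that the output of the `n`-fold memoryless extension of the
channel `W`, on input `x^n`, lies in the set `D ⊆ Y^n`. -/
def channelPr {X Y : Type*} [Fintype Y] (W : X → Y → ℝ) {n : ℕ}
    (x : Fin n → X) (D : Finset (Fin n → Y)) : ℝ :=
  ∑ y ∈ D, ∏ t, W (x t) (y t)

section Aux

variable {X : Type*} [Fintype X] [DecidableEq X]

/-- Sum of i.i.d. product weights over all sequences equals 1. -/
lemma sum_prod_eq_one (n : ℕ) (p : X → ℝ) (hp : ∑ a, p a = 1) :
    ∑ x : Fin n → X, ∏ t, p (x t) = 1 := by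
  have h := Fintype.prod_sum (ι := Fin n) (κ := fun _ => X) (fun _ a => p a)
  rw [← h]
  simp [hp]

/-- Count of occurrences of a letter in a sequence. -/
def cnt {n : ℕ} (x : Fin n → X) (a : X) : ℕ := (univ.filter fun t => x t = a).card

lemma sum_cnt {n : ℕ} (x : Fin n → X) : ∑ a, cnt x a = n := by
  have := Finset.card_eq_sum_card_fiberwise (f := x) (s := univ) (t := univ)
    (fun t _ => mem_univ _)
  simpa [cnt] using this.symm

lemma sum_cnt_mul {n : ℕ} (x : Fin n → X) (f : X → ℝ) :
    ∑ a, (cnt x a : ℝ) * f a = ∑ t, f (x t) := by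
  rw [← Finset.sum_fiberwise' univ x f]
  refine Finset.sum_congr rfl fun a _ => ?_
  rw [Finset.sum_const, nsmul_eq_mul, cnt]

lemma prod_cnt_pow {n : ℕ} (x : Fin n → X) (g : X → ℝ) :
    ∏ a, g a ^ cnt x a = ∏ t, g (x t) := by
  rw [← Finset.prod_fiberwise' univ x g]
  exact Finset.prod_congr rfl fun a _ => by rw [Finset.prod_const, cnt]

lemma shannonEntropy_nonneg (p : X → ℝ) (h0 : ∀ x, 0 ≤ p x) (h1 : ∑ x, p x = 1) :
    0 ≤ shannonEntropy p := by
  unfold shannonEntropy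
  rw [neg_nonneg]
  apply Finset.sum_nonpos
  intro x _
  have hle : p x ≤ 1 := by
    have := Finset.single_le_sum (f := p) (fun a _ => h0 a) (mem_univ x)
    linarith
  rcases eq_or_lt_of_le (h0 x) with h | h
  · simp [← h]
  · have hlog : Real.logb 2 (p x) ≤ 0 :=
      Real.logb_nonpos (by norm_num) (h0 x) hle
    exact mul_nonpos_of_nonneg_of_nonpos (h0 x) hlog

/-- The product weight of a type class equals `2 ^ (-n H(p))`. -/
lemma prod_pow_eq_rpow {n : ℕ} (hn : 0 < n) (c : X → ℕ) :
    (∏ a, ((c a : ℝ) / n) ^ c a)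
      = (2:ℝ) ^ (-((n:ℝ) * shannonEntropy (fun a => (c a : ℝ) / n))) := by
  set p : X → ℝ := fun a => (c a : ℝ) / n with hp
  have hn' : (n:ℝ) ≠ 0 := Nat.cast_ne_zero.2 hn.ne'
  have hfac : ∀ a, p a ^ c a = (2:ℝ) ^ ((c a : ℝ) * Real.logb 2 (p a)) := by
    intro a
    rcases Nat.eq_zero_or_pos (c a) with h | h
    · simp [p, h]
    · have hpa : 0 < p a := by
        have : (0:ℝ) < (c a : ℝ) := by exact_mod_cast h
        positivity
      rw [mul_comm, Real.rpow_mul (by norm_num), Real.rpow_logb (by norm_num) (by norm_num) hpa,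
        Real.rpow_natCast]
  calc ∏ a, p a ^ c a = ∏ a, (2:ℝ) ^ ((c a : ℝ) * Real.logb 2 (p a)) :=
        Finset.prod_congr rfl fun a _ => hfac a
    _ = (2:ℝ) ^ (∑ a, (c a : ℝ) * Real.logb 2 (p a)) :=
        (Real.rpow_sum_of_pos (by norm_num) _ _).symm
    _ = (2:ℝ) ^ (-((n:ℝ) * shannonEntropy p)) := by
        congr 1
        unfold shannonEntropy
        rw [mul_neg, neg_neg, Finset.mul_sum]
        refine Finset.sum_congr rfl fun a _ => ?_
        have : (c a : ℝ) = (n:ℝ) * p a := by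
          rw [hp]; field_simp
        rw [this]; ring

/-- Size of a type class is at most `2 ^ (n H(p))`. -/
lemma card_fiber_le {n : ℕ} (hn : 0 < n) (c : X → ℕ) :
    (((univ : Finset (Fin n → X)).filter fun x => cnt x = c).card : ℝ)
      ≤ (2:ℝ) ^ ((n:ℝ) * shannonEntropy (fun a => (c a : ℝ) / n)) := by
  classical
  by_cases hc : (univ.filter fun x : Fin n → X => cnt x = c).Nonempty
  case neg =>
    rw [Finset.not_nonempty_iff_eq_empty] at hc
    rw [hc]
    simp [Real.rpow_natCast]
    positivity
  obtain ⟨x₀, hx₀⟩ := hc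
  have hx₀c : cnt x₀ = c := (Finset.mem_filter.1 hx₀).2
  have hcsum : ∑ a, c a = n := by rw [← hx₀c]; exact sum_cnt x₀
  set p : X → ℝ := fun a => (c a : ℝ) / n with hpdef
  have hn' : (0:ℝ) < n := by exact_mod_cast hn
  have hp0 : ∀ a, 0 ≤ p a := fun a => by positivity
  have hp1 : ∑ a, p a = 1 := by
    rw [hpdef, ← Finset.sum_div]
    rw [show (∑ a, (c a : ℝ)) = (n:ℝ) by exact_mod_cast congrArg Nat.cast hcsum]
    field_simp
  set w : ℝ := (2:ℝ) ^ (-((n:ℝ) * shannonEntropy p)) with hwdef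
  have hw_pos : 0 < w := Real.rpow_pos_of_pos (by norm_num) _
  -- sum of weights over the fiber
  have hfib : ∑ x ∈ (univ.filter fun x : Fin n → X => cnt x = c), ∏ t, p (x t)
      = ((univ.filter fun x : Fin n → X => cnt x = c).card : ℝ) * w := by
    rw [Finset.sum_congr rfl (fun x hx => ?_), Finset.sum_const, nsmul_eq_mul]
    have hxc : cnt x = c := (Finset.mem_filter.1 hx).2
    rw [← prod_cnt_pow x p, hxc, hwdef]
    exact prod_pow_eq_rpow hn c
  have hle1 : ∑ x ∈ (univ.filter fun x : Fin n → X => cnt x = c), ∏ t, p (x t)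
      ≤ ∑ x : Fin n → X, ∏ t, p (x t) := by
    apply Finset.sum_le_sum_of_subset_of_nonneg (Finset.filter_subset _ _)
    intro x _ _
    exact Finset.prod_nonneg fun t _ => hp0 _
  rw [hfib, sum_prod_eq_one n p hp1] at hle1
  have hcardle : (((univ : Finset (Fin n → X)).filter fun x => cnt x = c).card : ℝ) ≤ 1 / w :=
    (le_div_iff₀ hw_pos).2 hle1
  have hwinv : 1 / w = (2:ℝ) ^ ((n:ℝ) * shannonEntropy p) := by
    rw [one_div, hwdef, Real.rpow_neg (by norm_num), inv_inv]
  rw [hwinv] at hcardle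
  exact hcardle

end Aux

/-- Converse bound: the rate of a deterministic identification code under input constraint `A`
with `lam1 + lam2 < 1` is bounded as `log₂ M ≤ n·C + |X|·log₂(n+1)`, where
`C = max { H(p) : pmf p on X with expected cost ≤ A }`. -/
theorem DI_converse_rate_bound
    {X Y : Type*} [Fintype X] [Fintype Y] [DecidableEq Y]
    (W : X → Y → ℝ) (hW0 : ∀ x y, 0 ≤ W x y) (hW1 : ∀ x, ∑ y, W x y = 1)
    (φ : X → ℝ) (hφ : ∀ x, 0 ≤ φ x) (A : ℝ) (hA : 0 ≤ A)
    (C : ℝ)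
    (hC : IsGreatest { h : ℝ | ∃ p : X → ℝ, (∀ x, 0 ≤ p x) ∧ (∑ x, p x = 1) ∧
        (∑ x, p x * φ x ≤ A) ∧ h = shannonEntropy p } C)
    (n M : ℕ) (u : Fin M → Fin n → X) (D : Fin M → Finset (Fin n → Y))
    (hcost : ∀ i, (∑ t, φ (u i t)) / n ≤ A)
    (lam1 lam2 : ℝ) (hlam : lam1 + lam2 < 1)
    (h1 : ∀ i, channelPr W (u i) (D i)ᶜ ≤ lam1)
    (h2 : ∀ i j, i ≠ j → channelPr W (u i) (D j) ≤ lam2) :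
    Real.logb 2 M ≤ (n : ℝ) * C + (Fintype.card X : ℝ) * Real.logb 2 ((n : ℝ) + 1) := by
  classical
  -- C is nonnegative
  obtain ⟨p₀, hp₀0, hp₀1, _, hCp₀⟩ := hC.1
  have hC0 : 0 ≤ C := hCp₀ ▸ shannonEntropy_nonneg p₀ hp₀0 hp₀1
  have hlogb_n1 : 0 ≤ Real.logb 2 ((n:ℝ) + 1) :=
    Real.logb_nonneg (by norm_num) (by push_cast; linarith [Nat.cast_nonneg (α := ℝ) n])
  have hRHS0 : 0 ≤ (n : ℝ) * C + (Fintype.card X : ℝ) * Real.logb 2 ((n : ℝ) + 1) := by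
    have : 0 ≤ (n:ℝ) * C := mul_nonneg (Nat.cast_nonneg n) hC0
    have h2' : 0 ≤ (Fintype.card X : ℝ) * Real.logb 2 ((n:ℝ) + 1) :=
      mul_nonneg (Nat.cast_nonneg _) hlogb_n1
    linarith
  -- the codewords are pairwise distinct
  have hUnivPr : ∀ x : Fin n → X, channelPr W x (univ : Finset (Fin n → Y)) = 1 := by
    intro x
    unfold channelPr
    have h := Fintype.prod_sum (ι := Fin n) (κ := fun _ => Y) (fun t y => W (x t) y)
    rw [← h]
    simp [hW1]
  have hinj : Function.Injective u := by
    intro i j hij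
    by_contra hne
    have hsplit : channelPr W (u i) (D j) + channelPr W (u i) (D j)ᶜ = 1 := by
      unfold channelPr
      rw [Finset.sum_add_sum_compl]
      exact hUnivPr (u i)
    have e2 : channelPr W (u i) (D j)ᶜ ≤ lam1 := by rw [hij]; exact h1 j
    have e1 : channelPr W (u i) (D j) ≤ lam2 := h2 i j hne
    linarith
  rcases Nat.eq_zero_or_pos n with hn | hn
  · -- n = 0 : at most one codeword, and RHS = 0
    subst hn
    have hM1 : M ≤ 1 := by
      have := Fintype.card_le_of_injective u hinj
      simpa using this
    have : Real.logb 2 (M:ℝ) ≤ 0 :=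
      Real.logb_nonpos (by norm_num) (Nat.cast_nonneg M) (by exact_mod_cast hM1)
    simpa using this
  rcases Nat.eq_zero_or_pos M with hM | hM
  · subst hM
    simpa using hRHS0
  -- the constrained set of sequences
  set S : Finset (Fin n → X) := univ.filter (fun x => ∑ t, φ (x t) ≤ n * A) with hSdef
  have hn' : (0:ℝ) < n := by exact_mod_cast hn
  have huS : ∀ i, u i ∈ S := by
    intro i
    rw [hSdef, Finset.mem_filter]
    refine ⟨mem_univ _, ?_⟩
    have := hcost i
    rw [div_le_iff₀ hn'] at this
    linarith
  have hMS : (M : ℝ) ≤ (S.card : ℝ) := by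
    have h1' : (univ.image u) ⊆ S := by
      intro x hx
      obtain ⟨i, _, rfl⟩ := Finset.mem_image.1 hx
      exact huS i
    have h2' : (univ.image u).card = M := by
      rw [Finset.card_image_of_injective _ hinj, card_univ, Fintype.card_fin]
    have := Finset.card_le_card h1'
    rw [h2'] at this
    exact_mod_cast this
  -- entropy of every empirical distribution of a sequence in S is at most C
  have hHC : ∀ c : X → ℕ, (∃ x ∈ S, cnt x = c) →
      shannonEntropy (fun a => (c a : ℝ) / n) ≤ C := by
    rintro c ⟨x₀, hx₀S, rfl⟩
    apply hC.2
    refine ⟨fun a => (cnt x₀ a : ℝ) / n, fun a => by positivity, ?_, ?_, rfl⟩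
    · rw [← Finset.sum_div]
      rw [show (∑ a, (cnt x₀ a : ℝ)) = (n:ℝ) by exact_mod_cast congrArg Nat.cast (sum_cnt x₀)]
      field_simp
    · have hsum : ∑ a, ((cnt x₀ a : ℝ) / n) * φ a = (∑ t, φ (x₀ t)) / n := by
        rw [← sum_cnt_mul x₀ φ, Finset.sum_div]
        exact Finset.sum_congr rfl fun a _ => by ring
      rw [hsum]
      have hx₀ := (Finset.mem_filter.1 (hSdef ▸ hx₀S)).2
      rw [div_le_iff₀ hn']
      linarith
  -- bound the cardinality of S by counting types
  set T : Finset (X → ℕ) := S.image cnt with hTdef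
  have hTcard : (T.card : ℝ) ≤ ((n:ℝ) + 1) ^ Fintype.card X := by
    have hsub : T ⊆ Fintype.piFinset (fun _ : X => Finset.range (n+1)) := by
      intro c hc
      obtain ⟨x, _, rfl⟩ := Finset.mem_image.1 hc
      rw [Fintype.mem_piFinset]
      intro a
      rw [Finset.mem_range, Nat.lt_succ_iff]
      calc cnt x a ≤ (univ : Finset (Fin n)).card := Finset.card_filter_le _ _
        _ = n := by simp
    have := Finset.card_le_card hsub
    rw [Fintype.card_piFinset] at this
    simp only [Finset.card_range, Finset.prod_const, Finset.card_univ] at this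
    calc (T.card : ℝ) ≤ ((n+1) ^ Fintype.card X : ℕ) := by exact_mod_cast this
      _ = ((n:ℝ) + 1) ^ Fintype.card X := by push_cast; ring
  have hScard : (S.card : ℝ) ≤ ((n:ℝ) + 1) ^ Fintype.card X * (2:ℝ) ^ ((n:ℝ) * C) := by
    have hfib := Finset.card_eq_sum_card_fiberwise (f := cnt) (s := S) (t := T)
      (fun x hx => Finset.mem_image_of_mem cnt hx)
    have hcast : (S.card : ℝ) = ∑ c ∈ T, ((S.filter fun x => cnt x = c).card : ℝ) := by
      exact_mod_cast hfib
    rw [hcast]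
    have hterm : ∀ c ∈ T, ((S.filter fun x => cnt x = c).card : ℝ) ≤ (2:ℝ) ^ ((n:ℝ) * C) := by
      intro c hc
      obtain ⟨x₀, hx₀S, hx₀c⟩ := Finset.mem_image.1 hc
      have hH := hHC c ⟨x₀, hx₀S, hx₀c⟩
      have hsubf : S.filter (fun x => cnt x = c) ⊆
          (univ : Finset (Fin n → X)).filter (fun x => cnt x = c) := by
        intro x hx
        rw [Finset.mem_filter] at hx ⊢
        exact ⟨mem_univ _, hx.2⟩
      calc ((S.filter fun x => cnt x = c).card : ℝ)
          ≤ (((univ : Finset (Fin n → X)).filter fun x => cnt x = c).card : ℝ) := by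
            exact_mod_cast Finset.card_le_card hsubf
        _ ≤ (2:ℝ) ^ ((n:ℝ) * shannonEntropy (fun a => (c a : ℝ) / n)) := card_fiber_le hn c
        _ ≤ (2:ℝ) ^ ((n:ℝ) * C) := by
            apply Real.rpow_le_rpow_of_exponent_le (by norm_num)
            exact mul_le_mul_of_nonneg_left hH (Nat.cast_nonneg n)
    calc ∑ c ∈ T, ((S.filter fun x => cnt x = c).card : ℝ)
        ≤ ∑ _c ∈ T, (2:ℝ) ^ ((n:ℝ) * C) := Finset.sum_le_sum hterm
      _ = (T.card : ℝ) * (2:ℝ) ^ ((n:ℝ) * C) := by rw [Finset.sum_const, nsmul_eq_mul]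
      _ ≤ ((n:ℝ) + 1) ^ Fintype.card X * (2:ℝ) ^ ((n:ℝ) * C) := by
          apply mul_le_mul_of_nonneg_right hTcard
          exact le_of_lt (Real.rpow_pos_of_pos (by norm_num) _)
  -- conclude via logb
  have hM' : (0:ℝ) < M := by exact_mod_cast hM
  have hfinal : (M:ℝ) ≤ ((n:ℝ) + 1) ^ Fintype.card X * (2:ℝ) ^ ((n:ℝ) * C) :=
    le_trans hMS hScard
  have hlog := Real.logb_le_logb_of_le (b := 2) (by norm_num) hM' hfinal
  calc Real.logb 2 (M:ℝ) ≤ Real.logb 2 (((n:ℝ) + 1) ^ Fintype.card X * (2:ℝ) ^ ((n:ℝ) * C)) :=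
        hlog
    _ = (n : ℝ) * C + (Fintype.card X : ℝ) * Real.logb 2 ((n : ℝ) + 1) := by
        rw [Real.logb_mul (by positivity) (by positivity), Real.logb_pow,
          Real.logb_rpow (by norm_num) (by norm_num)]
        ring
end

section
/- The deterministic identification capacity of a DMC in the double-exponential scale is zero: let W be a DMC with finite alphabets X, Y, and fix R > 0 and λ1, λ2 ≥ 0 with λ1 + λ2 < 1. Then for all sufficiently large n there do not exist codewords u_1,…,u_M ∈ X^n and decoding sets D_1,…,D_M ⊆ Y^n with M ≥ 2^{2^{nR}} such that W^n(D_i^c | u_i) ≤ λ1 for all i and W^n(D_j | u_i) ≤ λ2 for all i ≠ j. -/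
open Finset

lemma exp_ge_sq_div_four (t : ℝ) (ht : 0 ≤ t) : t ^ 2 / 4 ≤ Real.exp t := by
  have h := Real.add_one_le_exp (t / 2)
  have h2 : Real.exp t = Real.exp (t / 2) * Real.exp (t / 2) := by
    rw [← Real.exp_add]; ring_nf
  nlinarith [Real.exp_pos (t / 2)]

lemma key_growth (c R : ℝ) (hc : 0 ≤ c) (hR : 0 < R) :
    ∃ N : ℕ, ∀ n ≥ N, c ^ n < (2 : ℝ) ^ ((2 : ℝ) ^ ((n : ℝ) * R)) := by
  set b : ℝ := max c 2 with hbdef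
  have hb2 : (2 : ℝ) ≤ b := le_max_right _ _
  have hb0 : (0 : ℝ) < b := by linarith
  set L : ℝ := Real.logb 2 b with hLdef
  have hL0 : 0 < L := Real.logb_pos (by norm_num) (by linarith)
  set A : ℝ := R * Real.log 2 with hAdef
  have hA0 : 0 < A := mul_pos hR (Real.log_pos (by norm_num))
  refine ⟨⌈4 * L / A ^ 2⌉₊ + 1, fun n hn => ?_⟩
  have hn1 : 1 ≤ n := le_trans (Nat.le_add_left 1 _) hn
  have hnR : 4 * L / A ^ 2 < (n : ℝ) := by
    have := Nat.le_ceil (4 * L / A ^ 2)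
    have h2 : (⌈4 * L / A ^ 2⌉₊ : ℝ) < (n : ℝ) := by
      exact_mod_cast Nat.lt_of_lt_of_le (Nat.lt_succ_self _) hn
    linarith
  have hn0 : (1 : ℝ) ≤ (n : ℝ) := by exact_mod_cast hn1
  -- step 1 : c^n ≤ 2 ^ (n * L)  (rpow)
  have hb : b = (2 : ℝ) ^ L := (Real.rpow_logb (by norm_num) (by norm_num) hb0).symm
  have hcb : c ^ n ≤ b ^ n := pow_le_pow_left₀ hc (le_max_left _ _) n
  have hbn : b ^ n = (2 : ℝ) ^ ((n : ℝ) * L) := by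
    rw [hb, ← Real.rpow_natCast ((2:ℝ) ^ L) n, ← Real.rpow_mul (by norm_num)]
    ring_nf
  -- step 2 : n * L < 2 ^ (n * R)
  have hexp : (2 : ℝ) ^ ((n : ℝ) * R) = Real.exp ((n : ℝ) * A) := by
    rw [Real.rpow_def_of_pos (by norm_num), hAdef]
    ring_nf
  have hkey : (n : ℝ) * L < (2 : ℝ) ^ ((n : ℝ) * R) := by
    rw [hexp]
    have h1 : ((n : ℝ) * A) ^ 2 / 4 ≤ Real.exp ((n : ℝ) * A) :=
      exp_ge_sq_div_four _ (by positivity)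
    have h2 : (n : ℝ) * L < ((n : ℝ) * A) ^ 2 / 4 := by
      have h3 : 4 * L < (n : ℝ) * A ^ 2 := by
        rw [div_lt_iff₀ (by positivity)] at hnR
        linarith
      nlinarith
    linarith
  calc c ^ n ≤ (2 : ℝ) ^ ((n : ℝ) * L) := hbn ▸ hcb
    _ < (2 : ℝ) ^ ((2 : ℝ) ^ ((n : ℝ) * R)) :=
        Real.rpow_lt_rpow_left_iff (by norm_num) |>.mpr hkey

/-- The deterministic identification capacity of a DMC in the double-exponential scale is zero:
for any rate `R > 0` and error allowances `lam1 + lam2 < 1`, for all sufficiently large `n` there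
is no DI code with at least `2^{2^{nR}}` messages. -/
theorem DI_double_exponential_capacity_zero
    {X Y : Type*} [Fintype X] [Fintype Y] [DecidableEq Y]
    (W : X → Y → ℝ) (hW0 : ∀ x y, 0 ≤ W x y) (hW1 : ∀ x, ∑ y, W x y = 1)
    (R lam1 lam2 : ℝ) (hR : 0 < R) (hlam1 : 0 ≤ lam1) (hlam2 : 0 ≤ lam2)
    (hlam : lam1 + lam2 < 1) :
    ∃ N : ℕ, ∀ n ≥ N,
      ¬ ∃ (M : ℕ) (u : Fin M → Fin n → X) (D : Fin M → Finset (Fin n → Y)),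
        (2 : ℝ) ^ ((2 : ℝ) ^ ((n : ℝ) * R)) ≤ (M : ℝ) ∧
        (∀ i, channelPr W (u i) (D i)ᶜ ≤ lam1) ∧
        (∀ i j, i ≠ j → channelPr W (u i) (D j) ≤ lam2) := by
  classical
  obtain ⟨N, hN⟩ := key_growth (Fintype.card X : ℝ) R (by positivity) hR
  refine ⟨N, fun n hn h => ?_⟩
  obtain ⟨M, u, D, hM, h1, h2⟩ := h
  -- total probability is 1
  have htot : ∀ x : Fin n → X, channelPr W x (univ : Finset (Fin n → Y)) = 1 := by
    intro x
    unfold channelPr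
    rw [← Fintype.piFinset_univ, ← Finset.prod_univ_sum]
    simp [hW1]
  have hsplit : ∀ (x : Fin n → X) (E : Finset (Fin n → Y)),
      channelPr W x E + channelPr W x Eᶜ = 1 := by
    intro x E
    rw [← htot x]
    exact Finset.sum_add_sum_compl E _
  -- u is injective
  have hinj : Function.Injective u := by
    intro i j hij
    by_contra hne
    have e1 : 1 - lam1 ≤ channelPr W (u i) (D i) := by
      have := hsplit (u i) (D i)
      linarith [h1 i]
    have e2 : channelPr W (u j) (D i) ≤ lam2 := h2 j i (Ne.symm hne)
    rw [hij] at e1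
    linarith
  have hcard : M ≤ Fintype.card X ^ n := by
    have := Fintype.card_le_of_injective u hinj
    simpa [Fintype.card_fun] using this
  have hMr : (M : ℝ) ≤ (Fintype.card X : ℝ) ^ n := by exact_mod_cast hcard
  have := hN n hn
  linarith
end

section
/- Existence of a large Hamming-separated codebook inside a type class: let X be a finite alphabet, ε ∈ (0,1), θ(ε) = H₂(ε) + ε·log₂|X| where H₂ is the binary entropy function, and R > 0. Then for all sufficiently large n the following holds: for every n-type p on X (i.e., a pmf with n·p(x) ∈ ℕ for all x) with R ≤ H(p) − 3θ(ε), there exists a set V ⊆ T(p) of sequences in X^n such that |V| ≥ 2^{nR}/2 and d_H(v, v') ≥ nε for all distinct v, v' ∈ V. -/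
set_option maxHeartbeats 1000000

open Finset

/-- Binary entropy function (base 2). -/
noncomputable def binEnt (ε : ℝ) : ℝ :=
  -ε * Real.logb 2 ε - (1 - ε) * Real.logb 2 (1 - ε)

section Aux
open Nat Filter

lemma fact_le_mul_pow (l d : ℕ) : (l + d)! ≤ l ! * (l + d) ^ d := by
  induction d with
  | zero => simp
  | succ d ih =>
    have h1 : (l + (d+1))! = (l + d + 1) * (l + d)! := by
      rw [show l + (d+1) = (l + d) + 1 by omega, Nat.factorial_succ]
    rw [h1]
    calc (l + d + 1) * (l + d)! ≤ (l + d + 1) * (l ! * (l + d) ^ d) :=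
          Nat.mul_le_mul_left _ ih
      _ ≤ (l + d + 1) * (l ! * (l + d + 1) ^ d) := by
          exact Nat.mul_le_mul_left _ (Nat.mul_le_mul_left _ (Nat.pow_le_pow_left (by omega) _))
      _ = l ! * (l + (d+1)) ^ (d+1) := by ring_nf
      
lemma fact_pow_le (k l : ℕ) : k ! * k ^ l ≤ l ! * k ^ k := by
  rcases le_or_gt l k with h | h
  · have h1 : k ! ≤ l ! * k ^ (k - l) := by
      have := fact_le_mul_pow l (k - l)
      rwa [Nat.add_sub_cancel' h] at this
    calc k ! * k ^ l ≤ l ! * k ^ (k - l) * k ^ l := Nat.mul_le_mul_right _ h1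
      _ = l ! * k ^ k := by rw [mul_assoc, ← pow_add]; congr 2; omega
  · have h1 : k ! * (k+1) ^ (l - k) ≤ l ! := by
      have := Nat.factorial_mul_pow_le_factorial (m := k) (n := l - k)
      rwa [Nat.add_sub_cancel' h.le] at this
    calc k ! * k ^ l = k ! * k ^ (l - k) * k ^ k := by rw [mul_assoc, ← pow_add]; congr 2; omega
      _ ≤ k ! * (k+1) ^ (l-k) * k ^ k :=
          Nat.mul_le_mul_right _ (Nat.mul_le_mul_left _ (Nat.pow_le_pow_left (by omega) _))
      _ ≤ l ! * k ^ k := Nat.mul_le_mul_right _ h1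


variable {X : Type*} [Fintype X] [DecidableEq X]

lemma term_le (k l : X → ℕ) (h : ∑ x, l x = ∑ x, k x) :
    Nat.multinomial univ l * ∏ x, k x ^ l x ≤ Nat.multinomial univ k * ∏ x, k x ^ k x := by
  have hP : 0 < (∏ x, (l x)!) * ∏ x, (k x)! :=
    Nat.mul_pos (Finset.prod_pos fun _ _ => Nat.factorial_pos _)
      (Finset.prod_pos fun _ _ => Nat.factorial_pos _)
  refine Nat.le_of_mul_le_mul_left ?_ hP
  have e1 : (∏ x, (l x)!) * (∏ x, (k x)!) * (Nat.multinomial univ l * ∏ x, k x ^ l x)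
      = (∑ x, l x)! * ∏ x, ((k x)! * k x ^ l x) := by
    rw [Finset.prod_mul_distrib]
    have := Nat.multinomial_spec univ l
    calc (∏ x, (l x)!) * (∏ x, (k x)!) * (Nat.multinomial univ l * ∏ x, k x ^ l x)
        = ((∏ x, (l x)!) * Nat.multinomial univ l) * ((∏ x, (k x)!) * ∏ x, k x ^ l x) := by ring
      _ = _ := by rw [this]
  have e2 : (∏ x, (l x)!) * (∏ x, (k x)!) * (Nat.multinomial univ k * ∏ x, k x ^ k x)
      = (∑ x, k x)! * ∏ x, ((l x)! * k x ^ k x) := by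
    rw [Finset.prod_mul_distrib]
    have := Nat.multinomial_spec univ k
    calc (∏ x, (l x)!) * (∏ x, (k x)!) * (Nat.multinomial univ k * ∏ x, k x ^ k x)
        = ((∏ x, (k x)!) * Nat.multinomial univ k) * ((∏ x, (l x)!) * ∏ x, k x ^ k x) := by ring
      _ = _ := by rw [this]
  rw [e1, e2, h]
  exact Nat.mul_le_mul_left _ (Finset.prod_le_prod' fun x _ => fact_pow_le (k x) (l x))

lemma card_piAntidiag_le (n : ℕ) : ((univ : Finset X).piAntidiag n).card ≤ (n+1) ^ (Fintype.card X) := by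
  have h : ((univ : Finset X).piAntidiag n).card ≤ (univ : Finset (X → Fin (n+1))).card := by
    apply Finset.card_le_card_of_injOn
      (fun l x => (⟨min (l x) n, by omega⟩ : Fin (n+1))) (fun _ _ => mem_univ _)
    intro a ha b hb hab
    rw [Finset.mem_coe, mem_piAntidiag] at ha hb
    funext x
    have hma : a x ≤ n := ha.1 ▸ Finset.single_le_sum (f := a) (fun _ _ => Nat.zero_le _) (mem_univ x)
    have hmb : b x ≤ n := hb.1 ▸ Finset.single_le_sum (f := b) (fun _ _ => Nat.zero_le _) (mem_univ x)
    have := congrFun hab x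
    simp only [Fin.mk.injEq] at this
    omega
  simpa [Fintype.card_fun] using h

lemma pow_le_card_mul (n : ℕ) (k : X → ℕ) (h : ∑ x, k x = n) :
    n ^ n ≤ (n+1) ^ (Fintype.card X) * (Nat.multinomial univ k * ∏ x, k x ^ k x) := by
  have e : (n : ℕ) ^ n = ∑ l ∈ (univ : Finset X).piAntidiag n,
      Nat.multinomial univ l * ∏ x, k x ^ l x := by
    have := Finset.sum_pow_eq_sum_piAntidiag (univ : Finset X) (fun x => (k x : ℕ)) n
    rw [h] at this
    simpa using this
  rw [e]
  calc ∑ l ∈ (univ : Finset X).piAntidiag n, Nat.multinomial univ l * ∏ x, k x ^ l x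
      ≤ ∑ _l ∈ (univ : Finset X).piAntidiag n, Nat.multinomial univ k * ∏ x, k x ^ k x := by
        refine Finset.sum_le_sum fun l hl => ?_
        rw [mem_piAntidiag] at hl
        exact term_le k l (by rw [hl.1, h])
    _ = ((univ : Finset X).piAntidiag n).card * (Nat.multinomial univ k * ∏ x, k x ^ k x) := by
        rw [Finset.sum_const, smul_eq_mul]
    _ ≤ _ := Nat.mul_le_mul_right _ (card_piAntidiag_le n)

variable {X : Type*} [Fintype X] [DecidableEq X]

lemma exists_type_seq (n : ℕ) (k : X → ℕ) (h : ∑ x, k x = n) :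
    ∃ v : Fin n → X, ∀ a, (univ.filter (fun t => v t = a)).card = k a := by
  have hcard : Fintype.card (Σ a : X, Fin (k a)) = Fintype.card (Fin n) := by
    simp [Fintype.card_sigma, h]
  obtain ⟨e⟩ := Fintype.card_eq.mp hcard
  refine ⟨fun t => (e.symm t).1, fun a => ?_⟩
  have h1 : (univ.filter (fun t => (e.symm t).1 = a)).card
      = (univ.filter (fun s : Σ a : X, Fin (k a) => s.1 = a)).card := by
    apply Finset.card_equiv e.symm
    intro i
    simp
  have h2 : (univ.filter (fun s : Σ a : X, Fin (k a) => s.1 = a))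
      = Finset.map ⟨fun i : Fin (k a) => ⟨a, i⟩, fun i j hij => by simpa using hij⟩ univ := by
    ext ⟨b, i⟩
    simp only [mem_filter, mem_univ, true_and, Finset.mem_map, Function.Embedding.coeFn_mk,
      Sigma.mk.inj_iff]
    constructor
    · rintro rfl; exact ⟨i, rfl⟩
    · rintro ⟨j, rfl, -⟩; rfl
  rw [h1, h2, Finset.card_map, Finset.card_univ, Fintype.card_fin]

lemma multinomial_le_card_type (n : ℕ) (k : X → ℕ) (h : ∑ x, k x = n) :
    Nat.multinomial univ k ≤
      (univ.filter (fun v : Fin n → X => ∀ a, (univ.filter (fun t => v t = a)).card = k a)).card := by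
  classical
  obtain ⟨v₀, hv₀⟩ := exists_type_seq n k h
  set T := univ.filter (fun v : Fin n → X => ∀ a, (univ.filter (fun t => v t = a)).card = k a) with hT
  set Φ : Equiv.Perm (Fin n) → (Fin n → X) := fun σ => v₀ ∘ σ with hΦ
  have himg : ∀ σ : Equiv.Perm (Fin n), Φ σ ∈ T := by
    intro σ
    simp only [hT, mem_filter, mem_univ, true_and]
    intro a
    rw [← hv₀ a]
    exact Finset.card_equiv σ (fun i => by simp [hΦ])
  have hfiber : ∀ v ∈ T, (univ.filter (fun σ : Equiv.Perm (Fin n) => Φ σ = v)).card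
      ≤ ∏ a, (k a)! := by
    intro v hv
    rw [hT, mem_filter] at hv
    have hv' := hv.2
    have hcard2 : Fintype.card (∀ a : X, ({t // v t = a} ↪ {t // v₀ t = a})) = ∏ a, (k a)! := by
      rw [Fintype.card_pi]
      refine Finset.prod_congr rfl fun a _ => ?_
      rw [Fintype.card_embedding_eq]
      have c1 : Fintype.card {t // v t = a} = k a := by
        rw [Fintype.card_subtype]; exact hv' a
      have c2 : Fintype.card {t // v₀ t = a} = k a := by
        rw [Fintype.card_subtype]; exact hv₀ a
      rw [c1, c2, Nat.descFactorial_self]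
    rw [← hcard2, ← Fintype.card_subtype]
    have key : ∀ (σp : {σ : Equiv.Perm (Fin n) // Φ σ = v}) (t : Fin n) (a : X),
        v t = a → v₀ ((σp.1 : Equiv.Perm (Fin n)) t) = a := by
      rintro ⟨σ, hσ⟩ t a hta
      have := congrFun hσ t
      simp only [hΦ, Function.comp_apply] at this
      rw [this, hta]
    refine Fintype.card_le_of_injective (fun σp => fun a =>
      ⟨fun t => ⟨(σp.1 : Equiv.Perm (Fin n)) t.1, key σp t.1 a t.2⟩,
        fun t s hts => Subtype.ext ((σp.1 : Equiv.Perm (Fin n)).injective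
          (congrArg Subtype.val hts))⟩) ?_
    intro σp τp hst
    apply Subtype.ext
    apply Equiv.ext
    intro t
    have h1 := congrFun hst (v t)
    have h2 := congrFun (congrArg (fun (f : {s // v s = v t} ↪ {s // v₀ s = v t}) => (f : {s // v s = v t} → {s // v₀ s = v t})) h1) ⟨t, rfl⟩
    exact congrArg Subtype.val h2
  -- counting
  have hcount : (Fintype.card (Fin n))! ≤ T.card * ∏ a, (k a)! := by
    rw [← Fintype.card_perm, ← Finset.card_univ]
    rw [Finset.card_eq_sum_card_fiberwise (f := Φ) (t := T) (fun σ _ => himg σ)]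
    calc ∑ v ∈ T, (univ.filter (fun σ => Φ σ = v)).card
        ≤ ∑ _v ∈ T, ∏ a, (k a)! := Finset.sum_le_sum hfiber
      _ = T.card * ∏ a, (k a)! := by rw [Finset.sum_const, smul_eq_mul]
  have hspec := Nat.multinomial_spec univ k
  have hn : Nat.multinomial univ k * ∏ a, (k a)! = n ! := by rw [mul_comm]; rw [h] at hspec; exact hspec
  have hcount' : n ! ≤ T.card * ∏ a, (k a)! := by simpa using hcount
  exact Nat.le_of_mul_le_mul_right (by rw [hn]; exact hcount')
    (Finset.prod_pos fun _ _ => Nat.factorial_pos _)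

variable {X : Type*} [Fintype X] [DecidableEq X]

lemma card_ball_le (n r : ℕ) (hX : 1 ≤ Fintype.card X) (v : Fin n → X) :
    (univ.filter (fun w : Fin n → X => hammingDist v w ≤ r)).card
      ≤ (∑ j ∈ Finset.range (r+1), n.choose j) * (Fintype.card X) ^ r := by
  classical
  set s := univ.filter (fun w : Fin n → X => hammingDist v w ≤ r) with hs
  set t := (univ : Finset (Fin n)).powerset.filter (fun S => S.card ≤ r) with ht
  set D : (Fin n → X) → Finset (Fin n) := fun w => univ.filter (fun i => v i ≠ w i) with hD
  have hdist : ∀ w, hammingDist v w = (D w).card := fun w => rfl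
  have hmaps : ∀ w ∈ s, D w ∈ t := by
    intro w hw
    rw [hs, mem_filter] at hw
    rw [ht, mem_filter]
    exact ⟨Finset.mem_powerset.mpr (Finset.subset_univ _), by rw [← hdist]; exact hw.2⟩
  rw [Finset.card_eq_sum_card_fiberwise hmaps]
  have hfib : ∀ S ∈ t, (s.filter (fun w => D w = S)).card ≤ (Fintype.card X) ^ r := by
    intro S hS
    rw [ht, mem_filter] at hS
    have hb : (s.filter (fun w => D w = S)).card ≤ (Fintype.card X) ^ S.card := by
      have hc : Fintype.card ({i // i ∈ S} → X) = (Fintype.card X) ^ S.card := by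
        rw [Fintype.card_fun, Fintype.card_coe]
      rw [← hc, ← Finset.card_univ]
      refine Finset.card_le_card_of_injOn
        (fun w => fun i : {i // i ∈ S} => w i.1) (fun _ _ => mem_univ _) ?_
      intro w hw w' hw' hww
      rw [Finset.mem_coe, mem_filter] at hw hw'
      funext i
      by_cases hi : i ∈ S
      · exact congrFun hww ⟨i, hi⟩

      · have h1 : i ∉ D w := hw.2 ▸ hi
        have h2 : i ∉ D w' := hw'.2 ▸ hi
        rw [hD, mem_filter] at h1 h2
        push_neg at h1 h2
        rw [← h1 (mem_univ _), ← h2 (mem_univ _)]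
    exact hb.trans (Nat.pow_le_pow_right hX hS.2)
  calc ∑ S ∈ t, (s.filter (fun w => D w = S)).card
      ≤ ∑ _S ∈ t, (Fintype.card X) ^ r := Finset.sum_le_sum hfib
    _ = t.card * (Fintype.card X) ^ r := by rw [Finset.sum_const, smul_eq_mul]
    _ ≤ _ := by
        refine Nat.mul_le_mul_right _ ?_
        have hsub : t ⊆ (Finset.range (r+1)).biUnion
            (fun j => Finset.powersetCard j (univ : Finset (Fin n))) := by
          intro S hSt
          rw [ht, mem_filter] at hSt
          rw [Finset.mem_biUnion]
          exact ⟨S.card, Finset.mem_range.mpr (by omega),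
            Finset.mem_powersetCard.mpr ⟨Finset.subset_univ _, rfl⟩⟩
        calc t.card ≤ _ := Finset.card_le_card hsub
          _ ≤ ∑ j ∈ Finset.range (r+1), (Finset.powersetCard j (univ : Finset (Fin n))).card :=
              Finset.card_biUnion_le
          _ = ∑ j ∈ Finset.range (r+1), n.choose j := by
              refine Finset.sum_congr rfl fun j _ => ?_
              rw [Finset.card_powersetCard, Finset.card_univ, Fintype.card_fin]

lemma binEnt_nonneg {ε : ℝ} (hε : ε ∈ Set.Ioo (0:ℝ) 1) : 0 ≤ binEnt ε := by
  obtain ⟨h0, h1⟩ := hε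
  have l1 : Real.logb 2 ε ≤ 0 := Real.logb_nonpos one_lt_two h0.le h1.le
  have l2 : Real.logb 2 (1-ε) ≤ 0 := Real.logb_nonpos one_lt_two (by linarith) (by linarith)
  unfold binEnt; nlinarith

lemma binEnt_pos {ε : ℝ} (hε : ε ∈ Set.Ioo (0:ℝ) 1) : 0 < binEnt ε := by
  obtain ⟨h0, h1⟩ := hε
  have l1 : Real.logb 2 ε < 0 := Real.logb_neg one_lt_two h0 h1
  have l2 : Real.logb 2 (1-ε) ≤ 0 := Real.logb_nonpos one_lt_two (by linarith) (by linarith)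
  unfold binEnt; nlinarith

lemma binEnt_ge_half {ε : ℝ} (hε : ε ∈ Set.Ioo (0:ℝ) 1) (h2 : 1/2 ≤ ε) : 1 - ε ≤ binEnt ε := by
  obtain ⟨h0, h1⟩ := hε
  have l1 : Real.logb 2 ε ≤ 0 := Real.logb_nonpos one_lt_two h0.le h1.le
  have l2 : Real.logb 2 (1-ε) ≤ -1 := by
    have : Real.logb 2 (1-ε) ≤ Real.logb 2 (1/2) :=
      Real.logb_le_logb_of_le one_lt_two (by linarith) (by linarith)
    rw [show (1:ℝ)/2 = (2:ℝ)⁻¹ by norm_num, Real.logb_inv] at this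
    simpa using this
  unfold binEnt; nlinarith

-- binomial tail bound
lemma tail_le (n r : ℕ) (ε : ℝ) (hε : ε ∈ Set.Ioo (0:ℝ) 1) (hhalf : ε ≤ 1/2)
    (hr : (r:ℝ) ≤ n * ε) :
    (∑ j ∈ Finset.range (r+1), (n.choose j : ℝ)) ≤ (2:ℝ) ^ ((n:ℝ) * binEnt ε) := by
  obtain ⟨h0, h1⟩ := hε
  have hrn : r ≤ n := by
    have : (r:ℝ) ≤ n := le_trans hr (by nlinarith)
    exact_mod_cast this
  have h1e : 0 < 1 - ε := by linarith
  set S := ∑ j ∈ Finset.range (r+1), (n.choose j : ℝ) with hS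
  have key : S * (ε ^ r * (1-ε) ^ (n-r)) ≤ 1 := by
    have hterm : ∀ j ∈ Finset.range (r+1),
        (n.choose j : ℝ) * (ε ^ r * (1-ε) ^ (n-r)) ≤ (n.choose j : ℝ) * (ε ^ j * (1-ε) ^ (n-j)) := by
      intro j hj
      rw [Finset.mem_range] at hj
      have hjr : j ≤ r := by omega
      refine mul_le_mul_of_nonneg_left ?_ (by positivity)
      have e1 : ε ^ r = ε ^ j * ε ^ (r - j) := by rw [← pow_add]; congr 1; omega
      have e2 : (1-ε) ^ (n-j) = (1-ε) ^ (r-j) * (1-ε) ^ (n-r) := by rw [← pow_add]; congr 1; omega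
      have e3 : ε ^ (r-j) ≤ (1-ε) ^ (r-j) := pow_le_pow_left₀ h0.le (by linarith) _
      calc ε ^ r * (1-ε)^(n-r) = ε^j * (ε^(r-j) * (1-ε)^(n-r)) := by rw [e1]; ring
        _ ≤ ε^j * ((1-ε)^(r-j) * (1-ε)^(n-r)) := by
            refine mul_le_mul_of_nonneg_left (mul_le_mul_of_nonneg_right e3 (by positivity))
              (by positivity)
        _ = ε^j * (1-ε)^(n-j) := by rw [e2]
    calc S * (ε ^ r * (1-ε) ^ (n-r))
        = ∑ j ∈ Finset.range (r+1), (n.choose j : ℝ) * (ε ^ r * (1-ε) ^ (n-r)) := by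
          rw [hS, Finset.sum_mul]
      _ ≤ ∑ j ∈ Finset.range (r+1), (n.choose j : ℝ) * (ε ^ j * (1-ε) ^ (n-j)) :=
          Finset.sum_le_sum hterm
      _ ≤ ∑ j ∈ Finset.range (n+1), (n.choose j : ℝ) * (ε ^ j * (1-ε) ^ (n-j)) := by
          refine Finset.sum_le_sum_of_subset_of_nonneg
            (Finset.range_subset_range.mpr (by omega)) (fun j _ _ => by positivity)
      _ = (ε + (1-ε)) ^ n := by
          rw [add_pow]
          refine Finset.sum_congr rfl fun j _ => by ring
      _ = 1 := by norm_num
  have hpos : 0 < ε ^ r * (1-ε) ^ (n-r) := by positivity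
  have hSle : S ≤ (ε ^ r * (1-ε) ^ (n-r))⁻¹ := by
    rw [← one_div]
    rw [le_div_iff₀ hpos]
    exact key
  refine hSle.trans ?_
  set L1 := Real.logb 2 ε with hL1
  set L2 := Real.logb 2 (1-ε) with hL2
  have heps : (2:ℝ) ^ L1 = ε := Real.rpow_logb two_pos (by norm_num) h0
  have heps2 : (2:ℝ) ^ L2 = 1 - ε := Real.rpow_logb two_pos (by norm_num) h1e
  have e1 : ε ^ r = (2:ℝ) ^ (L1 * r) := by
    rw [← heps, ← Real.rpow_natCast ((2:ℝ) ^ L1) r, ← Real.rpow_mul (by norm_num)]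
  have e2 : (1-ε) ^ (n-r) = (2:ℝ) ^ (L2 * ((n:ℝ) - r)) := by
    rw [← heps2, ← Real.rpow_natCast ((2:ℝ) ^ L2) (n-r), ← Real.rpow_mul (by norm_num)]
    congr 1
    rw [Nat.cast_sub hrn]
  have e3 : (ε ^ r * (1-ε) ^ (n-r))⁻¹ = (2:ℝ) ^ (-(L1 * r + L2 * ((n:ℝ) - r))) := by
    rw [e1, e2, ← Real.rpow_add two_pos, ← Real.rpow_neg (by norm_num)]
  rw [e3]
  apply Real.rpow_le_rpow_of_exponent_le one_le_two
  have hL12 : L1 ≤ L2 := Real.logb_le_logb_of_le one_lt_two h0 (by linarith)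
  have hbe : binEnt ε = -ε * L1 - (1-ε) * L2 := rfl
  have hrn' : (r:ℝ) ≤ (n:ℝ) := by exact_mod_cast hrn
  nlinarith [mul_nonneg (sub_nonneg.mpr hr) (sub_nonneg.mpr hL12)]

variable {X : Type*} [Fintype X] [DecidableEq X]

lemma entropy_identity (n : ℕ) (hn : 0 < n) (k : X → ℕ) (h : ∑ x, k x = n)
    (p : X → ℝ) (hp : ∀ x, p x = (k x : ℝ) / n) :
    (2:ℝ) ^ ((n:ℝ) * shannonEntropy p) * ∏ x, (k x : ℝ) ^ (k x) = (n:ℝ) ^ n := by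
  have hn0 : (n:ℝ) ≠ 0 := Nat.cast_ne_zero.mpr hn.ne'
  have hnpos : (0:ℝ) < n := Nat.cast_pos.mpr hn
  have hsum : (n:ℝ) * shannonEntropy p = ∑ x, -((k x : ℝ) * Real.logb 2 (p x)) := by
    unfold shannonEntropy
    rw [mul_neg, Finset.mul_sum, ← Finset.sum_neg_distrib]
    refine Finset.sum_congr rfl fun x _ => ?_
    rw [neg_inj]
    rw [hp x]
    field_simp
  rw [hsum, Real.rpow_sum_of_pos two_pos, ← Finset.prod_mul_distrib]
  have : ∀ x ∈ (univ : Finset X),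
      (2:ℝ) ^ (-((k x:ℝ) * Real.logb 2 (p x))) * (k x : ℝ) ^ (k x) = (n:ℝ) ^ (k x) := by
    intro x _
    rcases Nat.eq_zero_or_pos (k x) with h0 | hpos
    · simp [h0]
    · have hk0 : (0:ℝ) < k x := Nat.cast_pos.mpr hpos
      have hpx : p x = (k x : ℝ) / n := hp x
      have hplog : Real.logb 2 (p x) = Real.logb 2 (k x) - Real.logb 2 n := by
        rw [hpx, Real.logb_div (by positivity) hn0]
      have e1 : (2:ℝ) ^ (-((k x:ℝ) * Real.logb 2 (p x)))
          = ((n:ℝ) / (k x : ℝ)) ^ (k x : ℕ) := by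
        rw [show -((k x:ℝ) * Real.logb 2 (p x)) = Real.logb 2 ((n:ℝ)/(k x:ℝ)) * (k x : ℕ) by
          rw [Real.logb_div hn0 (by positivity), hplog]; ring]
        rw [Real.rpow_mul (by norm_num), Real.rpow_logb two_pos (by norm_num) (by positivity),
          Real.rpow_natCast]
      rw [e1, div_pow, div_mul_cancel₀]
      positivity
  rw [Finset.prod_congr rfl this, Finset.prod_pow_eq_pow_sum, h]

lemma exists_poly_le_exp (c : ℕ) (θ : ℝ) (hθ : 0 < θ) :
    ∃ N : ℕ, ∀ n ≥ N, ((n:ℝ)+1) ^ c ≤ (2:ℝ) ^ ((n:ℝ) * θ) := by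
  set r : ℝ := (2:ℝ) ^ θ with hr
  have hr1 : 1 < r := Real.one_lt_rpow_iff_of_pos two_pos |>.mpr (Or.inl ⟨one_lt_two, hθ⟩)
  have hr0 : 0 < r := lt_trans one_pos hr1
  have h0 : Tendsto (fun n : ℕ => ((n:ℝ)) ^ c / r ^ n) atTop (nhds 0) :=
    tendsto_pow_const_div_const_pow_of_one_lt c hr1
  have h1 : Tendsto (fun n : ℕ => ((n+1:ℕ):ℝ) ^ c / r ^ (n+1)) atTop (nhds 0) :=
    h0.comp (tendsto_add_atTop_nat 1)
  have h2 : Tendsto (fun n : ℕ => (((n+1:ℕ):ℝ) ^ c / r ^ (n+1)) * r) atTop (nhds 0) := by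
    simpa using h1.mul_const r
  have h3 : ∀ᶠ n : ℕ in atTop, (((n+1:ℕ):ℝ) ^ c / r ^ (n+1)) * r < 1 :=
    h2.eventually (eventually_lt_nhds one_pos) |>.mono (fun n hn => hn)
  obtain ⟨N, hN⟩ := eventually_atTop.mp h3
  refine ⟨N, fun n hn => ?_⟩
  have hNn := hN n hn
  have hrpow : (0:ℝ) < r ^ n := pow_pos hr0 n
  have : ((n:ℝ)+1) ^ c ≤ r ^ n := by
    have he : (((n+1:ℕ):ℝ) ^ c / r ^ (n+1)) * r = ((n:ℝ)+1)^c / r ^ n := by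
      push_cast
      field_simp
      ring
    rw [he, div_lt_one hrpow] at hNn
    exact hNn.le
  refine this.trans ?_
  rw [hr, ← Real.rpow_natCast ((2:ℝ) ^ θ) n, ← Real.rpow_mul (by norm_num)]
  apply Real.rpow_le_rpow_of_exponent_le one_le_two
  nlinarith [hθ.le, Nat.cast_nonneg (α := ℝ) n]

end Aux

section Aux2
open Nat Filter

/-- Existence of a large Hamming-separated codebook inside a type class: for all sufficiently
large `n`, for every `n`-type `p` on `X` with `R ≤ H(p) − 3θ(ε)` (where
`θ(ε) = H₂(ε) + ε log₂|X|`), there is a set `V` of sequences of type `p` with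
`|V| ≥ 2^{nR}/2` whose elements are pairwise at Hamming distance at least `nε`. -/
theorem exists_hamming_separated_codebook
    {X : Type*} [Fintype X] [DecidableEq X]
    (ε R : ℝ) (hε : ε ∈ Set.Ioo (0 : ℝ) 1) (hR : 0 < R) :
    ∃ N : ℕ, ∀ n ≥ N, ∀ p : X → ℝ,
      (∀ x, 0 ≤ p x) → (∑ x, p x = 1) →
      (∀ x, ∃ k : ℕ, p x = (k : ℝ) / n) →
      R ≤ shannonEntropy p - 3 * (binEnt ε + ε * Real.logb 2 (Fintype.card X)) →
      ∃ V : Finset (Fin n → X),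
        (∀ v ∈ V, ∀ a : X,
          (((Finset.univ.filter (fun t => v t = a)).card : ℝ) / n = p a)) ∧
        (2 : ℝ) ^ ((n : ℝ) * R) / 2 ≤ (V.card : ℝ) ∧
        (∀ v ∈ V, ∀ v' ∈ V, v ≠ v' → (n : ℝ) * ε ≤ (hammingDist v v' : ℝ)) := by
  classical
  obtain ⟨hε0, hε1⟩ := hε
  set θ : ℝ := binEnt ε + ε * Real.logb 2 (Fintype.card X) with hθdef
  have hlogc0 : 0 ≤ Real.logb 2 (Fintype.card X) := by
    rcases Nat.eq_zero_or_pos (Fintype.card X) with h | h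
    · simp [h]
    · exact Real.logb_nonneg one_lt_two (by exact_mod_cast h)
  have hθpos : 0 < θ := by
    have := binEnt_pos ⟨hε0, hε1⟩
    nlinarith
  obtain ⟨N₀, hN₀⟩ := exists_poly_le_exp (Fintype.card X) (binEnt ε) (binEnt_pos ⟨hε0, hε1⟩)
  refine ⟨max N₀ 1, fun n hn p hp0 hpsum hptype hRH => ?_⟩
  have hn1 : 1 ≤ n := le_trans (le_max_right _ _) hn
  have hnpos : (0:ℝ) < n := by exact_mod_cast hn1
  have hn0 : (n:ℝ) ≠ 0 := hnpos.ne'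
  choose k hk using hptype
  have hsumk : ∑ x, k x = n := by
    have h1 : ((∑ x, k x : ℕ) : ℝ) = (n:ℝ) := by
      push_cast
      have : ∑ x, ((k x : ℝ)/n) = 1 := by
        rw [← hpsum]; exact Finset.sum_congr rfl fun x _ => (hk x).symm
      rw [← Finset.sum_div] at this
      field_simp at this
      linarith
    exact_mod_cast h1
  -- alphabet has at least two elements
  have hcard2 : 2 ≤ Fintype.card X := by
    by_contra hcl
    push_neg at hcl
    interval_cases hc : Fintype.card X
    · have : IsEmpty X := Fintype.card_eq_zero_iff.mp hc
      rw [Finset.univ_eq_empty, Finset.sum_empty] at hpsum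
      norm_num at hpsum
    · obtain ⟨x₀, hx₀⟩ := Fintype.card_eq_one_iff.mp hc
      have huniv : (univ : Finset X) = {x₀} := by
        ext y; simp [hx₀ y]
      have hpx₀ : p x₀ = 1 := by
        rw [← hpsum, huniv, Finset.sum_singleton]
      have hH : shannonEntropy p = 0 := by
        unfold shannonEntropy
        rw [huniv, Finset.sum_singleton, hpx₀]
        simp
      rw [hH] at hRH
      nlinarith [hθpos, hR]
  have hcard1 : 1 ≤ Fintype.card X := by omega
  have hlogc1 : 1 ≤ Real.logb 2 (Fintype.card X) := by
    have : Real.logb 2 2 ≤ Real.logb 2 (Fintype.card X) :=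
      Real.logb_le_logb_of_le one_lt_two two_pos (by exact_mod_cast hcard2)
    simpa using this
  -- the type class
  set T : Finset (Fin n → X) :=
    univ.filter (fun v : Fin n → X => ∀ a, (univ.filter (fun t => v t = a)).card = k a) with hT
  -- separated subsets
  set Sep : Finset (Fin n → X) → Prop :=
    fun V => ∀ v ∈ V, ∀ v' ∈ V, v ≠ v' → (n:ℝ) * ε ≤ (hammingDist v v' : ℝ) with hSep
  set 𝒮 : Finset (Finset (Fin n → X)) := T.powerset.filter Sep with h𝒮
  have hne : 𝒮.Nonempty := ⟨∅, by simp [h𝒮, hSep]⟩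
  obtain ⟨V, hV𝒮, hVmax⟩ := Finset.exists_max_image 𝒮 Finset.card hne
  rw [h𝒮, Finset.mem_filter, Finset.mem_powerset] at hV𝒮
  obtain ⟨hVT, hVsep⟩ := hV𝒮
  set r : ℕ := ⌊(n:ℝ) * ε⌋₊ with hrdef
  have hrle : (r:ℝ) ≤ (n:ℝ) * ε := Nat.floor_le (by positivity)
  have hcov : ∀ u ∈ T, ∃ v ∈ V, hammingDist v u ≤ r := by
    intro u hu
    by_contra hcc
    push_neg at hcc
    have huV : u ∉ V := by
      intro huV
      have := hcc u huV
      simp [hammingDist_self] at this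
    have hins : insert u V ∈ 𝒮 := by
      rw [h𝒮, Finset.mem_filter, Finset.mem_powerset]
      refine ⟨Finset.insert_subset hu hVT, ?_⟩
      intro v hv v' hv' hvv'
      rw [Finset.mem_insert] at hv hv'
      have hsep1 : ∀ w ∈ V, (n:ℝ) * ε ≤ (hammingDist u w : ℝ) := by
        intro w hw
        have h1 := hcc w hw
        have h2 : (n:ℝ) * ε < (r:ℝ) + 1 := Nat.lt_floor_add_one _
        have h3 : (r:ℝ) + 1 ≤ (hammingDist w u : ℝ) := by exact_mod_cast h1
        rw [hammingDist_comm]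
        linarith
      rcases hv with rfl | hv
      · rcases hv' with rfl | hv'
        · exact absurd rfl hvv'
        · exact hsep1 v' hv'
      · rcases hv' with rfl | hv'
        · rw [hammingDist_comm]; exact hsep1 v hv
        · exact hVsep v hv v' hv' hvv'
    have := hVmax _ hins
    rw [Finset.card_insert_of_notMem huV] at this
    omega
  -- counting
  have hcount : T.card ≤ V.card *
      ((∑ j ∈ Finset.range (r+1), n.choose j) * (Fintype.card X) ^ r) := by
    have hsub : T ⊆ V.biUnion (fun v => univ.filter (fun w => hammingDist v w ≤ r)) := by
      intro u hu
      obtain ⟨v, hv, hd⟩ := hcov u hu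
      exact Finset.mem_biUnion.mpr ⟨v, hv, Finset.mem_filter.mpr ⟨Finset.mem_univ _, hd⟩⟩
    calc T.card ≤ _ := Finset.card_le_card hsub
      _ ≤ ∑ v ∈ V, (univ.filter (fun w => hammingDist v w ≤ r)).card := Finset.card_biUnion_le
      _ ≤ ∑ _v ∈ V, ((∑ j ∈ Finset.range (r+1), n.choose j) * (Fintype.card X) ^ r) :=
          Finset.sum_le_sum (fun v _ => card_ball_le n r hcard1 v)
      _ = _ := by rw [Finset.sum_const, smul_eq_mul]
  -- real arithmetic
  set c := Fintype.card X with hc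
  set H := shannonEntropy p with hH
  -- ball bound in ℝ
  have hcr : ((c:ℝ)) ^ r ≤ (2:ℝ) ^ ((n:ℝ) * ε * Real.logb 2 c) := by
    have e1 : ((c:ℝ)) ^ r = (2:ℝ) ^ ((r:ℝ) * Real.logb 2 c) := by
      rw [mul_comm, Real.rpow_mul (by norm_num), Real.rpow_logb two_pos (by norm_num)
        (by exact_mod_cast hcard1), Real.rpow_natCast]
    rw [e1]
    apply Real.rpow_le_rpow_of_exponent_le one_le_two
    exact mul_le_mul_of_nonneg_right hrle hlogc0
  have hballR : ((∑ j ∈ Finset.range (r+1), n.choose j : ℕ) : ℝ) * ((c:ℝ)) ^ r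
      ≤ (2:ℝ) ^ ((n:ℝ) * (2 * θ)) := by
    rcases le_or_gt ε (1/2) with hhalf | hhalf
    · have h1 : ((∑ j ∈ Finset.range (r+1), n.choose j : ℕ) : ℝ)
          ≤ (2:ℝ) ^ ((n:ℝ) * binEnt ε) := by
        push_cast
        exact tail_le n r ε ⟨hε0, hε1⟩ hhalf hrle
      calc ((∑ j ∈ Finset.range (r+1), n.choose j : ℕ) : ℝ) * ((c:ℝ)) ^ r
          ≤ (2:ℝ) ^ ((n:ℝ) * binEnt ε) * (2:ℝ) ^ ((n:ℝ) * ε * Real.logb 2 c) := by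
            refine mul_le_mul h1 hcr (by positivity) (by positivity)
        _ = (2:ℝ) ^ ((n:ℝ) * binEnt ε + (n:ℝ) * ε * Real.logb 2 c) :=
            (Real.rpow_add two_pos _ _).symm
        _ ≤ (2:ℝ) ^ ((n:ℝ) * (2 * θ)) := by
            apply Real.rpow_le_rpow_of_exponent_le one_le_two
            have hb := binEnt_nonneg ⟨hε0, hε1⟩
            rw [hθdef]
            nlinarith [mul_nonneg (mul_nonneg hnpos.le hε0.le) hlogc0]
    · have h1 : ((∑ j ∈ Finset.range (r+1), n.choose j : ℕ) : ℝ) ≤ (2:ℝ) ^ ((n:ℝ) * 1) := by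
        have hnat : (∑ j ∈ Finset.range (r+1), n.choose j) ≤ 2 ^ n := by
          have hrn : r ≤ n := by
            have : (r:ℝ) ≤ (n:ℝ) := le_trans hrle (by nlinarith)
            exact_mod_cast this
          calc (∑ j ∈ Finset.range (r+1), n.choose j)
              ≤ ∑ j ∈ Finset.range (n+1), n.choose j :=
                Finset.sum_le_sum_of_subset (Finset.range_subset_range.mpr (by omega))
            _ = 2 ^ n := Nat.sum_range_choose n
        have : ((∑ j ∈ Finset.range (r+1), n.choose j : ℕ) : ℝ) ≤ ((2:ℝ)) ^ (n:ℕ) := by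
          exact_mod_cast hnat
        rw [← Real.rpow_natCast 2 n] at this
        rw [mul_one]
        exact this
      calc ((∑ j ∈ Finset.range (r+1), n.choose j : ℕ) : ℝ) * ((c:ℝ)) ^ r
          ≤ (2:ℝ) ^ ((n:ℝ) * 1) * (2:ℝ) ^ ((n:ℝ) * ε * Real.logb 2 c) := by
            refine mul_le_mul h1 hcr (by positivity) (by positivity)
        _ = (2:ℝ) ^ ((n:ℝ) * 1 + (n:ℝ) * ε * Real.logb 2 c) :=
            (Real.rpow_add two_pos _ _).symm
        _ ≤ (2:ℝ) ^ ((n:ℝ) * (2 * θ)) := by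
            apply Real.rpow_le_rpow_of_exponent_le one_le_two
            have hb := binEnt_ge_half ⟨hε0, hε1⟩ hhalf.le
            rw [hθdef]
            nlinarith [mul_nonneg hnpos.le hε0.le,
              mul_nonneg (mul_nonneg hnpos.le hε0.le) (by linarith : (0:ℝ) ≤ Real.logb 2 c - 1)]
  -- poly bound
  have hpoly : ((n:ℝ)+1) ^ c ≤ (2:ℝ) ^ ((n:ℝ) * θ) := by
    refine (hN₀ n (le_trans (le_max_left _ _) hn)).trans ?_
    apply Real.rpow_le_rpow_of_exponent_le one_le_two
    rw [hθdef]
    nlinarith [mul_nonneg (mul_nonneg hnpos.le hε0.le) hlogc0]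
  -- entropy identity and counting bounds, cast to ℝ
  have hprodpos : (0:ℝ) < ∏ x, (k x : ℝ) ^ (k x) := by
    apply Finset.prod_pos
    intro x _
    rcases Nat.eq_zero_or_pos (k x) with h | h
    · simp [h]
    · positivity
  have hid : (2:ℝ) ^ ((n:ℝ) * H) * ∏ x, (k x : ℝ) ^ (k x) = (n:ℝ) ^ n :=
    entropy_identity n hn1 k hsumk p hk
  have hnn : ((n:ℝ)) ^ n ≤ ((n:ℝ)+1) ^ c * ((Nat.multinomial univ k : ℝ) * ∏ x, (k x : ℝ) ^ (k x)) := by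
    have := pow_le_card_mul n k hsumk
    have hcast : ((n ^ n : ℕ) : ℝ) ≤ (((n+1) ^ c * (Nat.multinomial univ k * ∏ x, k x ^ k x) : ℕ) : ℝ) := by
      exact_mod_cast this
    push_cast at hcast
    convert hcast using 2
  have hMT : ((Nat.multinomial univ k : ℕ) : ℝ) ≤ (T.card : ℝ) := by
    exact_mod_cast multinomial_le_card_type n k hsumk
  -- chain
  have h2H : (2:ℝ) ^ ((n:ℝ) * H) ≤ ((n:ℝ)+1) ^ c * (Nat.multinomial univ k : ℝ) := by
    have hmul : (2:ℝ) ^ ((n:ℝ) * H) * ∏ x, (k x : ℝ) ^ (k x)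
        ≤ (((n:ℝ)+1) ^ c * (Nat.multinomial univ k : ℝ)) * ∏ x, (k x : ℝ) ^ (k x) := by
      rw [hid]
      calc ((n:ℝ)) ^ n ≤ ((n:ℝ)+1) ^ c * ((Nat.multinomial univ k : ℝ) * ∏ x, (k x : ℝ) ^ (k x)) := hnn
        _ = (((n:ℝ)+1) ^ c * (Nat.multinomial univ k : ℝ)) * ∏ x, (k x : ℝ) ^ (k x) := by ring
    exact le_of_mul_le_mul_right hmul hprodpos
  have hTcard : (T.card : ℝ) ≤ (V.card : ℝ) * (2:ℝ) ^ ((n:ℝ) * (2 * θ)) := by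
    have hcastc : (T.card : ℝ) ≤ (V.card : ℝ) *
        (((∑ j ∈ Finset.range (r+1), n.choose j : ℕ) : ℝ) * ((c:ℝ)) ^ r) := by
      exact_mod_cast hcount
    refine hcastc.trans ?_
    exact mul_le_mul_of_nonneg_left hballR (by positivity)
  -- final
  have hfinal : (2:ℝ) ^ ((n:ℝ) * R) ≤ (V.card : ℝ) := by
    have step1 : (2:ℝ) ^ ((n:ℝ) * (R + 3 * θ)) ≤ (2:ℝ) ^ ((n:ℝ) * H) := by
      apply Real.rpow_le_rpow_of_exponent_le one_le_two
      have : R + 3 * θ ≤ H := by rw [hθdef, hH]; linarith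
      nlinarith
    have step2 : (2:ℝ) ^ ((n:ℝ) * H) ≤ (2:ℝ) ^ ((n:ℝ) * θ) * (T.card : ℝ) := by
      refine h2H.trans ?_
      exact mul_le_mul hpoly hMT (by positivity) (by positivity)
    have step3 : (2:ℝ) ^ ((n:ℝ) * (R + 3*θ)) ≤ (V.card : ℝ) * (2:ℝ) ^ ((n:ℝ) * (3 * θ)) := by
      calc (2:ℝ) ^ ((n:ℝ) * (R + 3*θ)) ≤ (2:ℝ) ^ ((n:ℝ) * θ) * (T.card : ℝ) := step1.trans step2
        _ ≤ (2:ℝ) ^ ((n:ℝ) * θ) * ((V.card : ℝ) * (2:ℝ) ^ ((n:ℝ) * (2 * θ))) :=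
            mul_le_mul_of_nonneg_left hTcard (by positivity)
        _ = (V.card : ℝ) * ((2:ℝ) ^ ((n:ℝ) * θ) * (2:ℝ) ^ ((n:ℝ) * (2 * θ))) := by ring
        _ = (V.card : ℝ) * (2:ℝ) ^ ((n:ℝ) * (3 * θ)) := by
            rw [← Real.rpow_add two_pos]
            ring_nf
    have hsplit : (2:ℝ) ^ ((n:ℝ) * (R + 3*θ))
        = (2:ℝ) ^ ((n:ℝ) * R) * (2:ℝ) ^ ((n:ℝ) * (3*θ)) := by
      rw [← Real.rpow_add two_pos]
      ring_nf
    rw [hsplit] at step3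
    have hp3 : (0:ℝ) < (2:ℝ) ^ ((n:ℝ) * (3*θ)) := by positivity
    exact le_of_mul_le_mul_right step3 hp3
  refine ⟨V, ?_, ?_, ?_⟩
  · intro v hv a
    have hvT := hVT hv
    rw [hT, Finset.mem_filter] at hvT
    rw [hvT.2 a, hk a]
  · have : (2:ℝ) ^ ((n:ℝ) * R) / 2 ≤ (2:ℝ) ^ ((n:ℝ) * R) := by
      have : (0:ℝ) < (2:ℝ) ^ ((n:ℝ) * R) := by positivity
      linarith
    linarith
  · exact hVsep

end Aux2
end

section
/- Conditional type-class intersection lemma: let W be a DMC with finite alphabets X, Y whose channel matrix has pairwise distinct rows (i.e., for x ≠ x' there exists y with W(y|x) ≠ W(y|x')), let p be a pmf on X, and let ε > 0. Then there exist L(ε) > 0 and δ₀ > 0 such that for every δ ∈ (0, δ₀] and all sufficiently large n: for all x^n, x'^n ∈ T_δ(p) with d_H(x^n, x'^n) ≥ nε, one has |T_δ(W|x^n) ∩ T_δ(W|x'^n)| ≤ e^{−nL(ε)} · |T_δ(W|x^n)|. -/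
open Finset

/-- Number of occurrences `N(a | x^n)` of the letter `a` in the sequence `x^n`. -/
def occCount {X : Type*} [DecidableEq X] {n : ℕ} (x : Fin n → X) (a : X) : ℕ :=
  (Finset.univ.filter (fun t => x t = a)).card

/-- Number of joint occurrences `N(a, b | x^n, y^n)` of the pair `(a, b)` in `(x^n, y^n)`. -/
def jointCount {X Y : Type*} [DecidableEq X] [DecidableEq Y] {n : ℕ}
    (x : Fin n → X) (y : Fin n → Y) (a : X) (b : Y) : ℕ :=
  (Finset.univ.filter (fun t => x t = a ∧ y t = b)).card

/-- The `δ`-typical set `T_δ(p)` of sequences in `X^n`. -/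
def typicalSet {X : Type*} [DecidableEq X] (p : X → ℝ) (δ : ℝ) (n : ℕ) :
    Set (Fin n → X) :=
  {x | ∀ a : X, (0 < p a → |(occCount x a : ℝ) / n - p a| ≤ δ) ∧
    (p a = 0 → occCount x a = 0)}

/-- The conditionally `δ`-typical set `T_δ(W | x^n)` of output sequences in `Y^n`. -/
def condTypicalSet {X Y : Type*} [DecidableEq X] [DecidableEq Y]
    (W : X → Y → ℝ) (δ : ℝ) {n : ℕ} (x : Fin n → X) : Set (Fin n → Y) :=
  {y | ∀ a : X, ∀ b : Y,
    |(jointCount x y a b : ℝ) / n - ((occCount x a : ℝ) / n) * W a b| ≤ δ ∧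
    (W a b = 0 → jointCount x y a b = 0)}


section AuxLemmas

lemma exp_quad {u : ℝ} (h : |u| ≤ 1/2) : Real.exp u ≤ 1 + u + 2*u^2 := by
  obtain ⟨h1, h2⟩ := abs_le.mp h
  have hu1 : (0:ℝ) < 1 - u := by linarith
  have e1 : Real.exp u ≤ (1 - u)⁻¹ := by
    have := Real.add_one_le_exp (-u)
    rw [Real.exp_neg] at this
    rw [← Real.exp_neg] at *
    have hpos := Real.exp_pos (-u)
    calc Real.exp u = (Real.exp (-u))⁻¹ := by rw [← Real.exp_neg, neg_neg]
    _ ≤ (1 - u)⁻¹ := by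
        apply inv_anti₀ hu1
        linarith
  refine e1.trans ?_
  rw [inv_le_iff_one_le_mul₀ hu1]
  nlinarith

lemma mgf_step {Y : Type*} [Fintype Y] (w z : Y → ℝ) (hw0 : ∀ b, 0 ≤ w b)
    (hw1 : ∑ b, w b = 1) (hz0 : ∀ b, 0 ≤ z b) (hz1 : ∀ b, z b ≤ 1)
    {l : ℝ} (hl : |l| ≤ 1/2) :
    ∑ b, w b * Real.exp (l * (z b - ∑ c, w c * z c)) ≤ Real.exp (l^2/2) := by
  set μ := ∑ c, w c * z c with hμ
  have hμ0 : 0 ≤ μ := Finset.sum_nonneg fun c _ => mul_nonneg (hw0 c) (hz0 c)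
  have hμ1 : μ ≤ 1 := by
    rw [← hw1]; exact Finset.sum_le_sum fun c _ => by
      nlinarith [hw0 c, hz1 c, hz0 c]
  have step1 : ∑ b, w b * Real.exp (l * (z b - μ)) ≤
      ∑ b, w b * (1 + l*(z b - μ) + 2*(l*(z b - μ))^2) := by
    apply Finset.sum_le_sum
    intro b _
    apply mul_le_mul_of_nonneg_left _ (hw0 b)
    apply exp_quad
    rw [abs_mul]
    calc |l| * |z b - μ| ≤ (1/2) * 1 := by
          apply mul_le_mul hl _ (abs_nonneg _) (by norm_num)
          rw [abs_le]; constructor <;> nlinarith [hz0 b, hz1 b]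
    _ = 1/2 := by norm_num
  have expand : ∑ b, w b * (1 + l*(z b - μ) + 2*(l*(z b - μ))^2)
      = 1 + 2*l^2 * (∑ b, w b * (z b - μ)^2) := by
    rw [Finset.mul_sum]
    have : ∀ b, w b * (1 + l*(z b - μ) + 2*(l*(z b - μ))^2)
        = w b + l * (w b * z b - w b * μ) + 2*l^2 * (w b * (z b - μ)^2) := by
      intro b; ring
    rw [Finset.sum_congr rfl fun b _ => this b]
    rw [Finset.sum_add_distrib, Finset.sum_add_distrib, hw1, ← Finset.mul_sum,
      Finset.sum_sub_distrib, ← Finset.sum_mul, hw1]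
    simp [hμ]
  have var : ∑ b, w b * (z b - μ)^2 ≤ 1/4 := by
    have h1 : ∑ b, w b * (z b - μ)^2 = (∑ b, w b * (z b)^2) - μ^2 := by
      have : ∀ b, w b * (z b - μ)^2 = w b * (z b)^2 - 2*μ*(w b * z b) + μ^2 * w b := by
        intro b; ring
      rw [Finset.sum_congr rfl fun b _ => this b, Finset.sum_add_distrib,
        Finset.sum_sub_distrib, ← Finset.mul_sum, ← Finset.mul_sum, hw1]
      ring
    have h2 : ∑ b, w b * (z b)^2 ≤ μ := by
      apply Finset.sum_le_sum
      intro b _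
      have hh : 0 ≤ w b * (z b * (1 - z b)) :=
        mul_nonneg (hw0 b) (mul_nonneg (hz0 b) (by linarith [hz1 b]))
      nlinarith [hh]
    nlinarith [sq_nonneg (μ - 1/2)]
  calc ∑ b, w b * Real.exp (l * (z b - μ)) ≤ 1 + 2*l^2 * (∑ b, w b * (z b - μ)^2) := by
        rw [← expand]; exact step1
  _ ≤ 1 + l^2/2 := by nlinarith [sq_nonneg l]
  _ ≤ Real.exp (l^2/2) := by
      have := Real.add_one_le_exp (l^2/2); linarith

lemma chernoff {Y : Type*} [Fintype Y] [DecidableEq Y] {n : ℕ}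
    (w : Fin n → Y → ℝ) (Z : Fin n → Y → ℝ)
    (hw0 : ∀ t b, 0 ≤ w t b) (hw1 : ∀ t, ∑ b, w t b = 1)
    (hz0 : ∀ t b, 0 ≤ Z t b) (hz1 : ∀ t b, Z t b ≤ 1)
    {a : ℝ} (ha : 0 < a) (ha2 : a ≤ 1/2) :
    ∑ y ∈ univ.filter (fun y : Fin n → Y =>
        (n:ℝ) * a ≤ ∑ t, (Z t (y t) - ∑ c, w t c * Z t c)),
      ∏ t, w t (y t) ≤ Real.exp (-(n:ℝ) * a^2 / 2) := by
  classical
  set μ : Fin n → ℝ := fun t => ∑ c, w t c * Z t c with hμdef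
  have hQ0 : ∀ y : Fin n → Y, 0 ≤ ∏ t, w t (y t) :=
    fun y => Finset.prod_nonneg fun t _ => hw0 t (y t)
  have step1 : ∑ y ∈ univ.filter (fun y : Fin n → Y =>
        (n:ℝ) * a ≤ ∑ t, (Z t (y t) - μ t)), ∏ t, w t (y t)
      ≤ ∑ y : Fin n → Y, (∏ t, w t (y t)) *
          Real.exp (a * ((∑ t, (Z t (y t) - μ t)) - (n:ℝ)*a)) := by
    rw [← Finset.sum_filter_add_sum_filter_not univ
      (fun y : Fin n → Y => (n:ℝ) * a ≤ ∑ t, (Z t (y t) - μ t))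
      (fun y => (∏ t, w t (y t)) * Real.exp (a * ((∑ t, (Z t (y t) - μ t)) - (n:ℝ)*a)))]
    have p1 : ∑ y ∈ univ.filter (fun y : Fin n → Y =>
        (n:ℝ) * a ≤ ∑ t, (Z t (y t) - μ t)), ∏ t, w t (y t)
        ≤ ∑ y ∈ univ.filter (fun y : Fin n → Y =>
        (n:ℝ) * a ≤ ∑ t, (Z t (y t) - μ t)),
          (∏ t, w t (y t)) * Real.exp (a * ((∑ t, (Z t (y t) - μ t)) - (n:ℝ)*a)) := by
      apply Finset.sum_le_sum
      intro y hy
      rw [Finset.mem_filter] at hy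
      have h1 : (1:ℝ) ≤ Real.exp (a * ((∑ t, (Z t (y t) - μ t)) - (n:ℝ)*a)) := by
        rw [← Real.exp_zero]
        apply Real.exp_le_exp.mpr
        have := hy.2
        nlinarith
      nlinarith [hQ0 y, h1]
    have p2 : (0:ℝ) ≤ ∑ y ∈ univ.filter (fun y : Fin n → Y =>
        ¬ ((n:ℝ) * a ≤ ∑ t, (Z t (y t) - μ t))),
          (∏ t, w t (y t)) * Real.exp (a * ((∑ t, (Z t (y t) - μ t)) - (n:ℝ)*a)) :=
      Finset.sum_nonneg fun y _ => mul_nonneg (hQ0 y) (Real.exp_pos _).le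
    linarith
  have step2 : ∀ y : Fin n → Y, (∏ t, w t (y t)) *
      Real.exp (a * ((∑ t, (Z t (y t) - μ t)) - (n:ℝ)*a))
      = Real.exp (-(n:ℝ)*a^2) * ∏ t, (w t (y t) * Real.exp (a * (Z t (y t) - μ t))) := by
    intro y
    rw [Finset.prod_mul_distrib, ← Real.exp_sum, mul_comm (∏ t, w t (y t))]
    rw [mul_comm (Real.exp (-(n:ℝ)*a^2)), mul_assoc, ← Real.exp_add, mul_comm (Real.exp _)]
    congr 1
    rw [← Finset.mul_sum]
    ring
  have step3 : ∑ y : Fin n → Y, ∏ t, (w t (y t) * Real.exp (a * (Z t (y t) - μ t)))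
      = ∏ t, ∑ b, (w t b * Real.exp (a * (Z t b - μ t))) := by
    rw [Finset.prod_univ_sum]
    rw [Fintype.piFinset_univ]
  have step4 : ∏ t, ∑ b, (w t b * Real.exp (a * (Z t b - μ t)))
      ≤ Real.exp ((n:ℝ) * (a^2/2)) := by
    have : ∀ t : Fin n, ∑ b, (w t b * Real.exp (a * (Z t b - μ t))) ≤ Real.exp (a^2/2) := by
      intro t
      exact mgf_step (w t) (Z t) (hw0 t) (hw1 t) (hz0 t) (hz1 t)
        (by rw [abs_of_pos ha]; exact ha2)
    calc ∏ t, ∑ b, (w t b * Real.exp (a * (Z t b - μ t)))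
        ≤ ∏ (_ : Fin n), Real.exp (a^2/2) := by
          apply Finset.prod_le_prod
          · intro t _
            exact Finset.sum_nonneg fun b _ => mul_nonneg (hw0 t b) (Real.exp_pos _).le
          · intro t _; exact this t
    _ = Real.exp ((n:ℝ) * (a^2/2)) := by
          rw [Finset.prod_const, ← Real.exp_nat_mul]
          simp
  calc ∑ y ∈ univ.filter (fun y : Fin n → Y =>
        (n:ℝ) * a ≤ ∑ t, (Z t (y t) - μ t)), ∏ t, w t (y t)
      ≤ ∑ y : Fin n → Y, (∏ t, w t (y t)) *
          Real.exp (a * ((∑ t, (Z t (y t) - μ t)) - (n:ℝ)*a)) := step1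
  _ = Real.exp (-(n:ℝ)*a^2) * ∑ y : Fin n → Y,
        ∏ t, (w t (y t) * Real.exp (a * (Z t (y t) - μ t))) := by
      rw [Finset.mul_sum]; exact Finset.sum_congr rfl fun y _ => step2 y
  _ ≤ Real.exp (-(n:ℝ)*a^2) * Real.exp ((n:ℝ) * (a^2/2)) := by
      apply mul_le_mul_of_nonneg_left _ (Real.exp_pos _).le
      rw [step3]; exact step4
  _ = Real.exp (-(n:ℝ) * a^2 / 2) := by
      rw [← Real.exp_add]; congr 1; ring

lemma sum_filter_or_le {α : Type*} [Fintype α] (f : α → ℝ) (hf : ∀ x, 0 ≤ f x)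
    (P P₁ P₂ : α → Prop) [DecidablePred P] [DecidablePred P₁] [DecidablePred P₂]
    (h : ∀ x, P x → P₁ x ∨ P₂ x) :
    ∑ x ∈ univ.filter P, f x ≤ ∑ x ∈ univ.filter P₁, f x + ∑ x ∈ univ.filter P₂, f x := by
  classical
  have split : ∑ x ∈ univ.filter P, f x
      = ∑ x ∈ univ.filter (fun x => P x ∧ P₁ x), f x
        + ∑ x ∈ univ.filter (fun x => P x ∧ ¬ P₁ x), f x := by
    rw [← Finset.sum_filter_add_sum_filter_not (univ.filter P) P₁ f]
    congr 1 <;> · rw [Finset.filter_filter]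
  rw [split]
  apply add_le_add
  · apply Finset.sum_le_sum_of_subset_of_nonneg
    · intro x hx; rw [Finset.mem_filter] at *; exact ⟨hx.1, hx.2.2⟩
    · intro x _ _; exact hf x
  · apply Finset.sum_le_sum_of_subset_of_nonneg
    · intro x hx; rw [Finset.mem_filter] at *
      exact ⟨hx.1, (h x hx.2.1).resolve_left hx.2.2⟩
    · intro x _ _; exact hf x

lemma sum_comp_x {X : Type*} [Fintype X] [DecidableEq X] {n : ℕ} (x : Fin n → X)
    (f : X → ℝ) : ∑ t, f (x t) = ∑ a, (occCount x a : ℝ) * f a := by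
  rw [← Finset.sum_fiberwise_of_maps_to (g := x) (t := univ) (fun t _ => Finset.mem_univ _) (fun t => f (x t))]
  apply Finset.sum_congr rfl
  intro a _
  have : ∑ t ∈ univ.filter (fun t => x t = a), f (x t)
      = ∑ t ∈ univ.filter (fun t => x t = a), f a :=
    Finset.sum_congr rfl (fun t ht => by rw [(Finset.mem_filter.mp ht).2])
  rw [this, Finset.sum_const, occCount, nsmul_eq_mul]

lemma sum_comp_xy {X Y : Type*} [Fintype X] [DecidableEq X] [Fintype Y] [DecidableEq Y]
    {n : ℕ} (x : Fin n → X) (y : Fin n → Y) (g : X → Y → ℝ) :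
    ∑ t, g (x t) (y t) = ∑ a, ∑ b, (jointCount x y a b : ℝ) * g a b := by
  rw [← Finset.sum_fiberwise_of_maps_to (g := fun t => (x t, y t)) (t := univ)
    (fun t _ => Finset.mem_univ _) (fun t => g (x t) (y t)), Fintype.sum_prod_type]
  apply Finset.sum_congr rfl
  intro a _
  apply Finset.sum_congr rfl
  intro b _
  have h1 : ∑ t ∈ univ.filter (fun t => (x t, y t) = (a, b)), g (x t) (y t)
      = ∑ t ∈ univ.filter (fun t => (x t, y t) = (a, b)), g a b := by
    apply Finset.sum_congr rfl
    intro t ht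
    have h2 := (Finset.mem_filter.mp ht).2
    rw [Prod.mk.injEq] at h2
    rw [h2.1, h2.2]
  rw [h1, Finset.sum_const, nsmul_eq_mul, jointCount]
  congr 2
  apply congrArg
  apply Finset.filter_congr
  intro t _
  simp [Prod.mk.injEq]

lemma jointCount_cast {X Y : Type*} [DecidableEq X] [DecidableEq Y] {n : ℕ}
    (x : Fin n → X) (y : Fin n → Y) (a : X) (b : Y) :
    (jointCount x y a b : ℝ) = ∑ t, (if x t = a ∧ y t = b then (1:ℝ) else 0) := by
  rw [jointCount, Finset.card_filter]
  push_cast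
  simp

lemma hamming_cast {X : Type*} [DecidableEq X] {n : ℕ} (x x' : Fin n → X) :
    (hammingDist x x' : ℝ) = ∑ t, (if x t ≠ x' t then (1:ℝ) else 0) := by
  rw [hammingDist, Finset.card_filter]
  push_cast
  simp

lemma joint_tail {X Y : Type*} [Fintype X] [DecidableEq X] [Fintype Y] [DecidableEq Y]
    {n : ℕ} (W : X → Y → ℝ) (hW0 : ∀ a b, 0 ≤ W a b) (hW1 : ∀ a, ∑ b, W a b = 1)
    (x x'' : Fin n → X) (a' : X) (b : Y) {a : ℝ} (ha : 0 < a) (ha2 : a ≤ 1/2) :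
    ∑ y ∈ univ.filter (fun y : Fin n → Y =>
        (n:ℝ)*a ≤ |(jointCount x'' y a' b : ℝ) - ∑ t, (if x'' t = a' then W (x t) b else 0)|),
      ∏ t, W (x t) (y t) ≤ 2 * Real.exp (-(n:ℝ)*a^2/2) := by
  classical
  set M : ℝ := ∑ t, (if x'' t = a' then W (x t) b else 0) with hM
  set Z : Fin n → Y → ℝ := fun t c => if x'' t = a' ∧ c = b then 1 else 0 with hZ
  have hz0 : ∀ t c, 0 ≤ Z t c := by intro t c; rw [hZ]; positivity
  have hz1 : ∀ t c, Z t c ≤ 1 := by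
    intro t c; rw [hZ]; dsimp only; split <;> norm_num
  have hz0' : ∀ t c, 0 ≤ 1 - Z t c := by intro t c; have := hz1 t c; linarith
  have hz1' : ∀ t c, 1 - Z t c ≤ 1 := by intro t c; have := hz0 t c; linarith
  have hμ : ∀ t, ∑ c, W (x t) c * Z t c = (if x'' t = a' then W (x t) b else 0) := by
    intro t
    by_cases h : x'' t = a'
    · simp only [hZ, h, true_and, if_pos]
      rw [Finset.sum_eq_single b]
      · simp
      · intro c _ hc; simp [hc]
      · intro hb; exact absurd (Finset.mem_univ b) hb
    · simp [hZ, h]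
  have hμ' : ∀ t, ∑ c, W (x t) c * (1 - Z t c)
      = 1 - (if x'' t = a' then W (x t) b else 0) := by
    intro t
    have : ∑ c, W (x t) c * (1 - Z t c) = (∑ c, W (x t) c) - ∑ c, W (x t) c * Z t c := by
      rw [← Finset.sum_sub_distrib]; apply Finset.sum_congr rfl; intro c _; ring
    rw [this, hW1, hμ]
  have hSZ : ∀ y : Fin n → Y, ∑ t, Z t (y t) = (jointCount x'' y a' b : ℝ) := by
    intro y
    rw [jointCount_cast]
  -- upper tail
  have T1 := chernoff (fun t => W (x t)) Z (fun t c => hW0 _ c) (fun t => hW1 _) hz0 hz1 ha ha2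
  have T2 := chernoff (fun t => W (x t)) (fun t c => 1 - Z t c) (fun t c => hW0 _ c)
    (fun t => hW1 _) hz0' hz1' ha ha2
  have e1 : ∀ y : Fin n → Y, ∑ t, (Z t (y t) - ∑ c, W (x t) c * Z t c)
      = (jointCount x'' y a' b : ℝ) - M := by
    intro y
    rw [Finset.sum_sub_distrib, hSZ, hM]
    congr 1
    apply Finset.sum_congr rfl
    intro t _
    exact hμ t
  have e2 : ∀ y : Fin n → Y, ∑ t, ((1 - Z t (y t)) - ∑ c, W (x t) c * (1 - Z t c))
      = M - (jointCount x'' y a' b : ℝ) := by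
    intro y
    have : ∀ t, ((1 - Z t (y t)) - ∑ c, W (x t) c * (1 - Z t c))
        = (if x'' t = a' then W (x t) b else 0) - Z t (y t) := by
      intro t; rw [hμ' t]; ring
    rw [Finset.sum_congr rfl fun t _ => this t, Finset.sum_sub_distrib, hSZ, hM]
  have key := sum_filter_or_le (fun y : Fin n → Y => ∏ t, W (x t) (y t))
    (fun y => Finset.prod_nonneg fun t _ => hW0 _ _)
    (fun y : Fin n → Y => (n:ℝ)*a ≤ |(jointCount x'' y a' b : ℝ) - M|)
    (fun y : Fin n → Y => (n:ℝ)*a ≤ ∑ t, (Z t (y t) - ∑ c, W (x t) c * Z t c))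
    (fun y : Fin n → Y => (n:ℝ)*a ≤ ∑ t, ((1 - Z t (y t)) - ∑ c, W (x t) c * (1 - Z t c)))
    (by
      intro y hy
      rw [e1, e2]
      rcases abs_cases ((jointCount x'' y a' b : ℝ) - M) with ⟨h1, _⟩ | ⟨h1, _⟩
      · left; rw [h1] at hy; exact hy
      · right; rw [h1] at hy; linarith)
  calc ∑ y ∈ univ.filter (fun y : Fin n → Y =>
        (n:ℝ)*a ≤ |(jointCount x'' y a' b : ℝ) - M|), ∏ t, W (x t) (y t)
      ≤ _ + _ := key
  _ ≤ Real.exp (-(n:ℝ)*a^2/2) + Real.exp (-(n:ℝ)*a^2/2) := add_le_add T1 T2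
  _ = 2 * Real.exp (-(n:ℝ)*a^2/2) := by ring

lemma det_lemma {X Y : Type*} [Fintype X] [DecidableEq X] [Fintype Y] [DecidableEq Y]
    {n : ℕ} (W : X → Y → ℝ) (hW0 : ∀ a b, 0 ≤ W a b) (hW1 : ∀ a, ∑ b, W a b = 1)
    {c : ℝ} (hc0 : 0 ≤ c)
    (hc : ∀ a a' : X, a ≠ a' → c ≤ ∑ b, (W a b - W a' b)^2)
    (x x' : Fin n → X) {ε δ γ : ℝ} (hn : 0 < n) (hεc : 0 < c * ε)
    (hγ : γ * (Fintype.card X : ℝ) ≤ c*ε/8) (hδm : δ * (Fintype.card X : ℝ) ≤ c*ε/8)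
    (hocc : ∀ a, |(occCount x a : ℝ) - (occCount x' a : ℝ)| ≤ 2*n*δ)
    (hham : (n:ℝ)*ε ≤ (hammingDist x x' : ℝ)) :
    ∃ (a' : X) (b : Y), (n:ℝ)*γ ≤
      |(∑ t, if x' t = a' then W (x t) b else 0) - (occCount x' a' : ℝ) * W a' b| := by
  classical
  by_contra hcon
  push_neg at hcon
  set m : ℝ := (Fintype.card X : ℝ) with hm
  set ip : X → X → ℝ := fun a a' => ∑ b, W a b * W a' b with hip
  have hW1' : ∀ a b, W a b ≤ 1 := by
    intro a b
    calc W a b ≤ ∑ b', W a b' := Finset.single_le_sum (fun b' _ => hW0 a b') (Finset.mem_univ b)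
    _ = 1 := hW1 a
  have hip1 : ∀ a, ip a a ≤ 1 := by
    intro a
    calc ip a a ≤ ∑ b, W a b := Finset.sum_le_sum fun b _ => by nlinarith [hW0 a b, hW1' a b]
    _ = 1 := hW1 a
  have hip0 : ∀ a a', 0 ≤ ip a a' := fun a a' =>
    Finset.sum_nonneg fun b _ => mul_nonneg (hW0 a b) (hW0 a' b)
  set S : ℝ := ∑ t, ip (x t) (x' t) with hS
  set T₁ : ℝ := ∑ t, ip (x t) (x t) with hT₁
  set T₂ : ℝ := ∑ t, ip (x' t) (x' t) with hT₂
  -- (i) S as sum over a', b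
  have eqS : ∑ a', ∑ b, (∑ t, if x' t = a' then W (x t) b else 0) * W a' b = S := by
    rw [hS]
    have : ∀ a' b, (∑ t, if x' t = a' then W (x t) b else 0) * W a' b
        = ∑ t, (if x' t = a' then W (x t) b * W a' b else 0) := by
      intro a' b
      rw [Finset.sum_mul]
      apply Finset.sum_congr rfl
      intro t _
      split <;> simp_all
    rw [Finset.sum_congr rfl fun a' _ => Finset.sum_congr rfl fun b _ => this a' b]
    rw [Finset.sum_comm]
    have swap2 : ∀ b, ∑ a', ∑ t, (if x' t = a' then W (x t) b * W a' b else 0)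
        = ∑ t, W (x t) b * W (x' t) b := by
      intro b
      rw [Finset.sum_comm]
      apply Finset.sum_congr rfl
      intro t _
      rw [Finset.sum_ite_eq]
      simp
    rw [Finset.sum_congr rfl fun b _ => swap2 b]
    rw [Finset.sum_comm]
  -- (ii) T₂ ≤ S + nγm
  have hT₂S : T₂ ≤ S + (n:ℝ)*γ*m := by
    have e1 : T₂ = ∑ a', (occCount x' a' : ℝ) * ip a' a' := by
      rw [hT₂]; exact sum_comp_x x' (fun a => ip a a)
    have e2 : ∀ a', (occCount x' a' : ℝ) * ip a' a'
        = ∑ b, ((occCount x' a' : ℝ) * W a' b) * W a' b := by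
      intro a'
      rw [hip]
      dsimp only
      rw [Finset.mul_sum]
      apply Finset.sum_congr rfl
      intro b _
      ring
    have key : T₂ - S ≤ (n:ℝ)*γ*m := by
      rw [e1, ← eqS, ← Finset.sum_sub_distrib]
      have : ∀ a', (occCount x' a' : ℝ) * ip a' a'
          - ∑ b, (∑ t, if x' t = a' then W (x t) b else 0) * W a' b ≤ (n:ℝ)*γ := by
        intro a'
        rw [e2, ← Finset.sum_sub_distrib]
        have hb : ∀ b, ((occCount x' a' : ℝ) * W a' b) * W a' b
            - (∑ t, if x' t = a' then W (x t) b else 0) * W a' b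
            ≤ ((n:ℝ)*γ) * W a' b := by
          intro b
          have h1 := hcon a' b
          have h2 := abs_lt.mp h1
          have h3 : (occCount x' a' : ℝ) * W a' b
              - (∑ t, if x' t = a' then W (x t) b else 0) ≤ (n:ℝ)*γ := by linarith [h2.1]
          have := hW0 a' b
          nlinarith
        calc ∑ b, (((occCount x' a' : ℝ) * W a' b) * W a' b
            - (∑ t, if x' t = a' then W (x t) b else 0) * W a' b)
            ≤ ∑ b, ((n:ℝ)*γ) * W a' b := Finset.sum_le_sum fun b _ => hb b
        _ = (n:ℝ)*γ := by rw [← Finset.mul_sum, hW1]; ring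
      calc ∑ a', ((occCount x' a' : ℝ) * ip a' a'
          - ∑ b, (∑ t, if x' t = a' then W (x t) b else 0) * W a' b)
          ≤ ∑ (_ : X), (n:ℝ)*γ := Finset.sum_le_sum fun a' _ => this a'
      _ = (n:ℝ)*γ*m := by rw [Finset.sum_const, nsmul_eq_mul, Finset.card_univ, hm]; ring
    linarith
  -- (iii) S ≤ T₁/2 + T₂/2 - (c/2) * nε
  have hScore : S ≤ T₁/2 + T₂/2 - (c/2) * ((n:ℝ)*ε) := by
    have pt : ∀ t, ip (x t) (x' t) ≤ ip (x t) (x t)/2 + ip (x' t) (x' t)/2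
        - (c/2) * (if x t ≠ x' t then (1:ℝ) else 0) := by
      intro t
      by_cases h : x t = x' t
      · simp [h]
      · have h1 := hc (x t) (x' t) h
        have h2 : ∑ b, (W (x t) b - W (x' t) b)^2
            = ip (x t) (x t) + ip (x' t) (x' t) - 2 * ip (x t) (x' t) := by
          rw [hip]
          dsimp only
          rw [Finset.mul_sum, ← Finset.sum_add_distrib, ← Finset.sum_sub_distrib]
          apply Finset.sum_congr rfl
          intro b _
          ring
        simp only [h, if_pos, ne_eq, not_false_eq_true]
        nlinarith
    have hsum : S ≤ ∑ t, (ip (x t) (x t)/2 + ip (x' t) (x' t)/2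
        - (c/2) * (if x t ≠ x' t then (1:ℝ) else 0)) :=
      Finset.sum_le_sum fun t _ => pt t
    have expand : ∑ t, (ip (x t) (x t)/2 + ip (x' t) (x' t)/2
        - (c/2) * (if x t ≠ x' t then (1:ℝ) else 0))
        = T₁/2 + T₂/2 - (c/2) * (hammingDist x x' : ℝ) := by
      rw [Finset.sum_sub_distrib, Finset.sum_add_distrib, ← Finset.mul_sum,
        ← hamming_cast, hT₁, hT₂, ← Finset.sum_div, ← Finset.sum_div]
    rw [expand] at hsum
    have : (c/2) * ((n:ℝ)*ε) ≤ (c/2) * (hammingDist x x' : ℝ) := by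
      apply mul_le_mul_of_nonneg_left hham (by linarith)
    linarith
  -- (iv) T₁ ≤ T₂ + 2nδm
  have hT₁₂ : T₁ ≤ T₂ + 2*(n:ℝ)*δ*m := by
    have e1 : T₁ = ∑ a, (occCount x a : ℝ) * ip a a := by
      rw [hT₁]; exact sum_comp_x x (fun a => ip a a)
    have e2 : T₂ = ∑ a, (occCount x' a : ℝ) * ip a a := by
      rw [hT₂]; exact sum_comp_x x' (fun a => ip a a)
    have key : T₁ - T₂ ≤ 2*(n:ℝ)*δ*m := by
      rw [e1, e2, ← Finset.sum_sub_distrib]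
      have pt : ∀ a, (occCount x a : ℝ) * ip a a - (occCount x' a : ℝ) * ip a a
          ≤ 2*(n:ℝ)*δ := by
        intro a
        have h2 := abs_le.mp (hocc a)
        have h3 : (0:ℝ) ≤ 2*(n:ℝ)*δ := le_trans (abs_nonneg _) (hocc a)
        nlinarith [hip1 a, hip0 a a]
      calc ∑ a, ((occCount x a : ℝ) * ip a a - (occCount x' a : ℝ) * ip a a)
          ≤ ∑ (_ : X), 2*(n:ℝ)*δ := Finset.sum_le_sum fun a _ => pt a
      _ = 2*(n:ℝ)*δ*m := by rw [Finset.sum_const, nsmul_eq_mul, Finset.card_univ, hm]; ring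
    linarith
  -- combine
  have hn0 : (0:ℝ) ≤ (n:ℝ) := Nat.cast_nonneg n
  have hnpos : (0:ℝ) < (n:ℝ) := Nat.cast_pos.mpr hn
  have keyf : (c/2)*((n:ℝ)*ε) ≤ (n:ℝ)*γ*m + (n:ℝ)*δ*m := by linarith
  nlinarith [keyf, mul_le_mul_of_nonneg_left hγ hn0, mul_le_mul_of_nonneg_left hδm hn0,
    mul_pos hnpos hεc]

lemma typ_count_bound {X Y : Type*} [Fintype X] [DecidableEq X] [Fintype Y] [DecidableEq Y]
    (W : X → Y → ℝ) {δ : ℝ} {n : ℕ} (hn : 0 < n) {x : Fin n → X} {y : Fin n → Y}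
    (hy : y ∈ condTypicalSet W δ x) (a : X) (b : Y) :
    |(jointCount x y a b : ℝ) - (occCount x a : ℝ) * W a b| ≤ (n:ℝ)*δ := by
  have h := (hy a b).1
  have hnn : (0:ℝ) < (n:ℝ) := Nat.cast_pos.mpr hn
  have e : (jointCount x y a b : ℝ) / n - ((occCount x a : ℝ) / n) * W a b
      = ((jointCount x y a b : ℝ) - (occCount x a : ℝ) * W a b) / n := by ring
  rw [e, abs_div, abs_of_pos hnn, div_le_iff₀ hnn] at h
  linarith

lemma Q_bounds {X Y : Type*} [Fintype X] [DecidableEq X] [Fintype Y] [DecidableEq Y]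
    (W : X → Y → ℝ) (hW0 : ∀ a b, 0 ≤ W a b) {δ : ℝ} (hδ : 0 ≤ δ) {n : ℕ} (hn : 0 < n)
    (x : Fin n → X) (y : Fin n → Y) (hy : y ∈ condTypicalSet W δ x) :
    Real.exp ((∑ a, ∑ b, (occCount x a : ℝ) * W a b * Real.log (W a b))
        - (n:ℝ)*δ*(∑ a, ∑ b, |Real.log (W a b)|)) ≤ ∏ t, W (x t) (y t)
    ∧ ∏ t, W (x t) (y t) ≤
      Real.exp ((∑ a, ∑ b, (occCount x a : ℝ) * W a b * Real.log (W a b))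
        + (n:ℝ)*δ*(∑ a, ∑ b, |Real.log (W a b)|)) := by
  classical
  set H : ℝ := ∑ a, ∑ b, (occCount x a : ℝ) * W a b * Real.log (W a b) with hH
  set C : ℝ := ∑ a, ∑ b, |Real.log (W a b)| with hC
  have hpos : ∀ t, 0 < W (x t) (y t) := by
    intro t
    rcases lt_or_eq_of_le (hW0 (x t) (y t)) with h | h
    · exact h
    · exfalso
      have h0 := (hy (x t) (y t)).2 h.symm
      have : t ∈ Finset.univ.filter (fun s => x s = x t ∧ y s = y t) := by
        simp
      rw [jointCount] at h0
      have := Finset.card_pos.mpr ⟨t, this⟩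
      omega
  have hQpos : 0 < ∏ t, W (x t) (y t) := Finset.prod_pos fun t _ => hpos t
  have hlog : Real.log (∏ t, W (x t) (y t))
      = ∑ a, ∑ b, (jointCount x y a b : ℝ) * Real.log (W a b) := by
    rw [Real.log_prod (fun t _ => (hpos t).ne')]
    exact sum_comp_xy x y (fun a b => Real.log (W a b))
  have hbound : |Real.log (∏ t, W (x t) (y t)) - H| ≤ (n:ℝ)*δ*C := by
    rw [hlog, hH, ← Finset.sum_sub_distrib]
    calc |∑ a, (∑ b, (jointCount x y a b : ℝ) * Real.log (W a b)
          - ∑ b, (occCount x a : ℝ) * W a b * Real.log (W a b))|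
        ≤ ∑ a, |∑ b, (jointCount x y a b : ℝ) * Real.log (W a b)
          - ∑ b, (occCount x a : ℝ) * W a b * Real.log (W a b)| :=
        Finset.abs_sum_le_sum_abs _ _
    _ ≤ ∑ a, ∑ b, (n:ℝ)*δ*|Real.log (W a b)| := by
        apply Finset.sum_le_sum
        intro a _
        rw [← Finset.sum_sub_distrib]
        calc |∑ b, ((jointCount x y a b : ℝ) * Real.log (W a b)
              - (occCount x a : ℝ) * W a b * Real.log (W a b))|
            ≤ ∑ b, |((jointCount x y a b : ℝ)
              - (occCount x a : ℝ) * W a b) * Real.log (W a b)| := by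
              refine le_trans (Finset.abs_sum_le_sum_abs _ _) ?_
              apply Finset.sum_le_sum
              intro b _
              apply le_of_eq
              congr 1
              ring
        _ ≤ ∑ b, (n:ℝ)*δ*|Real.log (W a b)| := by
              apply Finset.sum_le_sum
              intro b _
              rw [abs_mul]
              exact mul_le_mul_of_nonneg_right (typ_count_bound W hn hy a b) (abs_nonneg _)
    _ = (n:ℝ)*δ*C := by
        rw [hC, Finset.mul_sum]
        exact Finset.sum_congr rfl fun a _ => by rw [Finset.mul_sum]
  obtain ⟨hb1, hb2⟩ := abs_le.mp hbound
  constructor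
  · calc Real.exp (H - (n:ℝ)*δ*C) ≤ Real.exp (Real.log (∏ t, W (x t) (y t))) :=
        Real.exp_le_exp.mpr (by linarith)
    _ = ∏ t, W (x t) (y t) := Real.exp_log hQpos
  · calc ∏ t, W (x t) (y t) = Real.exp (Real.log (∏ t, W (x t) (y t))) :=
        (Real.exp_log hQpos).symm
    _ ≤ Real.exp (H + (n:ℝ)*δ*C) := Real.exp_le_exp.mpr (by linarith)

-- the mean simplification for x'' = x
lemma mean_eq_occ {X Y : Type*} [Fintype X] [DecidableEq X] [Fintype Y] [DecidableEq Y]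
    {n : ℕ} (W : X → Y → ℝ) (x : Fin n → X) (a : X) (b : Y) :
    ∑ t, (if x t = a then W (x t) b else 0) = (occCount x a : ℝ) * W a b := by
  have e1 : ∀ t, (if x t = a then W (x t) b else 0) = (if x t = a then W a b else 0) := by
    intro t
    split_ifs with h
    · rw [h]
    · rfl
  rw [Finset.sum_congr rfl fun t _ => e1 t, ← Finset.sum_filter]
  rw [Finset.sum_const, nsmul_eq_mul, occCount]

lemma Qy_pos_of_zero_cond {X Y : Type*} [Fintype X] [DecidableEq X] [Fintype Y] [DecidableEq Y]
    {n : ℕ} (W : X → Y → ℝ) (x : Fin n → X) (y : Fin n → Y)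
    (hQ : 0 < ∏ t, W (x t) (y t)) (a : X) (b : Y) (h : W a b = 0) :
    jointCount x y a b = 0 := by
  by_contra h0
  rw [jointCount] at h0
  have hne : (Finset.univ.filter (fun t => x t = a ∧ y t = b)).Nonempty := by
    rw [← Finset.card_pos]; omega
  obtain ⟨t, ht⟩ := hne
  rw [Finset.mem_filter] at ht
  have hz : W (x t) (y t) = 0 := by rw [ht.2.1, ht.2.2, h]
  have hfac : ∏ t, W (x t) (y t) = 0 := Finset.prod_eq_zero (Finset.mem_univ t) hz
  rw [hfac] at hQ
  exact lt_irrefl _ hQ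

lemma QA_lower {X Y : Type*} [Fintype X] [DecidableEq X] [Fintype Y] [DecidableEq Y]
    (W : X → Y → ℝ) (hW0 : ∀ a b, 0 ≤ W a b) (hW1 : ∀ a, ∑ b, W a b = 1)
    {δ : ℝ} (hδ : 0 < δ) (hδ2 : δ ≤ 1/2) {n : ℕ} (hn : 0 < n) (x : Fin n → X)
    [DecidablePred (fun y : Fin n → Y => y ∈ condTypicalSet W δ x)] :
    1 - 2*(Fintype.card X : ℝ)*(Fintype.card Y : ℝ)*Real.exp (-(n:ℝ)*δ^2/2)
      ≤ ∑ y ∈ univ.filter (fun y : Fin n → Y => y ∈ condTypicalSet W δ x),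
          ∏ t, W (x t) (y t) := by
  classical
  have hQ0 : ∀ y : Fin n → Y, 0 ≤ ∏ t, W (x t) (y t) :=
    fun y => Finset.prod_nonneg fun t _ => hW0 _ _
  have total : ∑ y : Fin n → Y, ∏ t, W (x t) (y t) = 1 := by
    rw [← Fintype.piFinset_univ, ← Finset.prod_univ_sum]
    rw [Finset.prod_congr rfl fun t _ => hW1 (x t)]
    simp
  have split := Finset.sum_filter_add_sum_filter_not Finset.univ
    (fun y : Fin n → Y => y ∈ condTypicalSet W δ x) (fun y => ∏ t, W (x t) (y t))
  -- pointwise bound for the complement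
  have ptwise : ∀ y : Fin n → Y,
      (if y ∉ condTypicalSet W δ x then ∏ t, W (x t) (y t) else 0)
      ≤ ∑ a, ∑ b, (if (n:ℝ)*δ ≤ |(jointCount x y a b : ℝ)
          - ∑ t, (if x t = a then W (x t) b else 0)| then ∏ t, W (x t) (y t) else 0) := by
    intro y
    have hR0 : (0:ℝ) ≤ ∑ a, ∑ b, (if (n:ℝ)*δ ≤ |(jointCount x y a b : ℝ)
        - ∑ t, (if x t = a then W (x t) b else 0)| then ∏ t, W (x t) (y t) else 0) :=
      Finset.sum_nonneg fun a _ => Finset.sum_nonneg fun b _ => by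
        split <;> [exact hQ0 y; exact le_refl 0]
    by_cases hy : y ∈ condTypicalSet W δ x
    · rw [if_neg (fun h => h hy)]
      exact hR0
    · rw [if_pos hy]
      rcases eq_or_lt_of_le (hQ0 y) with hQz | hQp
      · calc ∏ t, W (x t) (y t) = 0 := hQz.symm
          _ ≤ _ := hR0
      · -- find a violating pair
        rw [condTypicalSet, Set.mem_setOf_eq] at hy
        obtain ⟨a, hy2⟩ := not_forall.mp hy
        obtain ⟨b, hy3⟩ := not_forall.mp hy2
        have hab : ¬ (|(jointCount x y a b : ℝ) / n - ((occCount x a : ℝ) / n) * W a b| ≤ δ)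
            ∨ ¬ (W a b = 0 → jointCount x y a b = 0) := by
          by_cases h1 : |(jointCount x y a b : ℝ) / n - ((occCount x a : ℝ) / n) * W a b| ≤ δ
          · exact Or.inr (fun himp => hy3 ⟨h1, himp⟩)
          · exact Or.inl h1
        have hviol : (n:ℝ)*δ ≤ |(jointCount x y a b : ℝ)
            - ∑ t, (if x t = a then W (x t) b else 0)| := by
          rw [mean_eq_occ]
          rcases hab with h | h
          · have hnn : (0:ℝ) < (n:ℝ) := Nat.cast_pos.mpr hn
            have e : (jointCount x y a b : ℝ) / n - ((occCount x a : ℝ) / n) * W a b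
                = ((jointCount x y a b : ℝ) - (occCount x a : ℝ) * W a b) / n := by ring
            rw [not_le] at h
            rw [e, abs_div, abs_of_pos hnn] at h
            rw [lt_div_iff₀ hnn] at h
            linarith
          · rw [Classical.not_imp] at h
            exact absurd (Qy_pos_of_zero_cond W x y hQp a b h.1) h.2
        have step1 : (if (n:ℝ)*δ ≤ |(jointCount x y a b : ℝ)
            - ∑ t, (if x t = a then W (x t) b else 0)| then ∏ t, W (x t) (y t) else 0)
            ≤ ∑ b, (if (n:ℝ)*δ ≤ |(jointCount x y a b : ℝ)
            - ∑ t, (if x t = a then W (x t) b else 0)| then ∏ t, W (x t) (y t) else 0) :=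
          Finset.single_le_sum (f := fun c => if (n:ℝ)*δ ≤ |(jointCount x y a c : ℝ)
            - ∑ t, (if x t = a then W (x t) c else 0)| then ∏ t, W (x t) (y t) else 0)
            (fun c _ => by split <;> [exact hQ0 y; exact le_refl 0]) (Finset.mem_univ b)
        have step2 : ∑ b, (if (n:ℝ)*δ ≤ |(jointCount x y a b : ℝ)
            - ∑ t, (if x t = a then W (x t) b else 0)| then ∏ t, W (x t) (y t) else 0)
            ≤ ∑ a, ∑ b, (if (n:ℝ)*δ ≤ |(jointCount x y a b : ℝ)
            - ∑ t, (if x t = a then W (x t) b else 0)| then ∏ t, W (x t) (y t) else 0) :=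
          Finset.single_le_sum (f := fun a' => ∑ c, if (n:ℝ)*δ ≤ |(jointCount x y a' c : ℝ)
            - ∑ t, (if x t = a' then W (x t) c else 0)| then ∏ t, W (x t) (y t) else 0)
            (fun a' _ => Finset.sum_nonneg fun c _ => by
            split <;> [exact hQ0 y; exact le_refl 0]) (Finset.mem_univ a)
        rw [if_pos hviol] at step1
        exact le_trans step1 step2
  have compl_bound : ∑ y ∈ univ.filter (fun y : Fin n → Y => y ∉ condTypicalSet W δ x),
      ∏ t, W (x t) (y t)
      ≤ 2*(Fintype.card X : ℝ)*(Fintype.card Y : ℝ)*Real.exp (-(n:ℝ)*δ^2/2) := by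
    calc ∑ y ∈ univ.filter (fun y : Fin n → Y => y ∉ condTypicalSet W δ x),
        ∏ t, W (x t) (y t)
        = ∑ y : Fin n → Y, (if y ∉ condTypicalSet W δ x then ∏ t, W (x t) (y t) else 0) := by
          rw [Finset.sum_filter]
    _ ≤ ∑ y : Fin n → Y, ∑ a, ∑ b, (if (n:ℝ)*δ ≤ |(jointCount x y a b : ℝ)
          - ∑ t, (if x t = a then W (x t) b else 0)| then ∏ t, W (x t) (y t) else 0) :=
        Finset.sum_le_sum fun y _ => ptwise y
    _ = ∑ a, ∑ b, ∑ y : Fin n → Y, (if (n:ℝ)*δ ≤ |(jointCount x y a b : ℝ)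
          - ∑ t, (if x t = a then W (x t) b else 0)| then ∏ t, W (x t) (y t) else 0) := by
        rw [Finset.sum_comm]
        apply Finset.sum_congr rfl
        intro a _
        rw [Finset.sum_comm]
    _ ≤ ∑ (_ : X), ∑ (_ : Y), 2 * Real.exp (-(n:ℝ)*δ^2/2) := by
        apply Finset.sum_le_sum
        intro a _
        apply Finset.sum_le_sum
        intro b _
        rw [← Finset.sum_filter]
        exact joint_tail W hW0 hW1 x x a b hδ hδ2
    _ = 2*(Fintype.card X : ℝ)*(Fintype.card Y : ℝ)*Real.exp (-(n:ℝ)*δ^2/2) := by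
        rw [Finset.sum_const, Finset.sum_const, Finset.card_univ, Finset.card_univ,
          nsmul_eq_mul, nsmul_eq_mul]
        ring
  linarith

end AuxLemmas

set_option maxHeartbeats 1000000 in
/-- Conditional type-class intersection lemma: if the rows of `W` are pairwise distinct, then for
typical `x^n, x'^n` at Hamming distance at least `nε`, the conditionally typical sets satisfy
`|T_δ(W|x^n) ∩ T_δ(W|x'^n)| ≤ e^{−nL(ε)} |T_δ(W|x^n)|`. -/
theorem cond_type_class_intersection
    {X Y : Type*} [Fintype X] [Fintype Y] [DecidableEq X] [DecidableEq Y]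
    (W : X → Y → ℝ) (hW0 : ∀ x y, 0 ≤ W x y) (hW1 : ∀ x, ∑ y, W x y = 1)
    (hrows : ∀ x x' : X, x ≠ x' → ∃ y, W x y ≠ W x' y)
    (p : X → ℝ) (hp0 : ∀ x, 0 ≤ p x) (hp1 : ∑ x, p x = 1)
    (ε : ℝ) (hε : 0 < ε) :
    ∃ L : ℝ, 0 < L ∧ ∃ δ₀ : ℝ, 0 < δ₀ ∧ ∀ δ : ℝ, δ ∈ Set.Ioc (0 : ℝ) δ₀ →
      ∃ N : ℕ, ∀ n ≥ N, ∀ x x' : Fin n → X,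
        x ∈ typicalSet p δ n → x' ∈ typicalSet p δ n →
        (n : ℝ) * ε ≤ (hammingDist x x' : ℝ) →
        ((condTypicalSet W δ x ∩ condTypicalSet W δ x').ncard : ℝ) ≤
          Real.exp (-(n : ℝ) * L) * ((condTypicalSet W δ x).ncard : ℝ) := by
  classical
  by_cases hX : ∃ a a' : X, a ≠ a'
  swap
  · -- degenerate case: X has at most one element
    push_neg at hX
    refine ⟨1, one_pos, 1, one_pos, fun δ hδ => ⟨1, fun n hn x x' hx hx' hham => ?_⟩⟩
    exfalso
    have hxx : x = x' := funext fun t => hX (x t) (x' t)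
    rw [hxx, hammingDist_self] at hham
    have hn1 : (1:ℝ) ≤ (n:ℝ) := by exact_mod_cast hn
    rw [Nat.cast_zero] at hham
    nlinarith
  obtain ⟨a₀, a₀', ha₀⟩ := hX
  have hYne : (Finset.univ : Finset Y).Nonempty := by
    by_contra h
    rw [Finset.not_nonempty_iff_eq_empty] at h
    have := hW1 a₀
    rw [h, Finset.sum_empty] at this
    norm_num at this
  set m : ℝ := (Fintype.card X : ℝ) with hm
  set k : ℝ := (Fintype.card Y : ℝ) with hk
  have hm1 : (1:ℝ) ≤ m := by
    rw [hm]; exact_mod_cast Fintype.card_pos_iff.mpr ⟨a₀⟩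
  have hk1 : (1:ℝ) ≤ k := by
    rw [hk]; exact_mod_cast Fintype.card_pos_iff.mpr ⟨hYne.choose⟩
  -- the row-separation constant c
  have hPne : (Finset.univ.filter (fun q : X × X => q.1 ≠ q.2)).Nonempty :=
    ⟨(a₀, a₀'), by rw [Finset.mem_filter]; exact ⟨Finset.mem_univ _, ha₀⟩⟩
  set c : ℝ := (Finset.univ.filter (fun q : X × X => q.1 ≠ q.2)).inf' hPne
    (fun q => ∑ b, (W q.1 b - W q.2 b)^2) with hcdef
  have hc_le : ∀ a a' : X, a ≠ a' → c ≤ ∑ b, (W a b - W a' b)^2 := by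
    intro a a' h
    have hmem : (a, a') ∈ (Finset.univ.filter (fun q : X × X => q.1 ≠ q.2)) := by
      rw [Finset.mem_filter]; exact ⟨Finset.mem_univ _, h⟩
    rw [hcdef]
    exact Finset.inf'_le (fun q : X × X => ∑ b, (W q.1 b - W q.2 b)^2) hmem
  have hc_pos : 0 < c := by
    rw [hcdef, Finset.lt_inf'_iff]
    intro q hq
    rw [Finset.mem_filter] at hq
    obtain ⟨b, hb⟩ := hrows q.1 q.2 hq.2
    have hb' : W q.1 b - W q.2 b ≠ 0 := sub_ne_zero.mpr hb
    have h1 : 0 < (W q.1 b - W q.2 b)^2 := by positivity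
    exact Finset.sum_pos' (fun b _ => sq_nonneg _) ⟨b, Finset.mem_univ b, h1⟩
  -- constants
  set γ : ℝ := min (c*ε/(8*m)) 1 with hγdef
  have hγpos : 0 < γ := by
    apply lt_min _ one_pos
    positivity
  have hγ1 : γ ≤ 1 := min_le_right _ _
  set C : ℝ := ∑ a, ∑ b, |Real.log (W a b)| with hCdef
  have hC0 : 0 ≤ C :=
    Finset.sum_nonneg fun a _ => Finset.sum_nonneg fun b _ => abs_nonneg _
  set L : ℝ := γ^2/32 with hLdef
  have hL : 0 < L := by positivity
  refine ⟨L, hL, min (γ/2) (γ^2/(64*(C+1))), by positivity, ?_⟩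
  intro δ hδIoc
  obtain ⟨hδ0, hδ1⟩ := hδIoc
  have hδγ : δ ≤ γ/2 := le_trans hδ1 (min_le_left _ _)
  have hδC : δ ≤ γ^2/(64*(C+1)) := le_trans hδ1 (min_le_right _ _)
  have hδhalf : δ ≤ 1/2 := by linarith
  -- choice of N
  refine ⟨⌈max (2*Real.log (4*m*k)/δ^2) (16*Real.log 4/γ^2)⌉₊ + 1, ?_⟩
  intro n hn x x' hx hx' hham
  have hnR : max (2*Real.log (4*m*k)/δ^2) (16*Real.log 4/γ^2) ≤ (n:ℝ) := by
    calc max (2*Real.log (4*m*k)/δ^2) (16*Real.log 4/γ^2)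
        ≤ (⌈max (2*Real.log (4*m*k)/δ^2) (16*Real.log 4/γ^2)⌉₊ : ℝ) := Nat.le_ceil _
    _ ≤ (n:ℝ) := by exact_mod_cast Nat.le_of_succ_le hn
  have hnpos : 0 < n := lt_of_lt_of_le (Nat.succ_pos _) hn
  have hnR1 : 2*Real.log (4*m*k)/δ^2 ≤ (n:ℝ) := le_trans (le_max_left _ _) hnR
  have hnR2 : 16*Real.log 4/γ^2 ≤ (n:ℝ) := le_trans (le_max_right _ _) hnR
  have hncast : (0:ℝ) < (n:ℝ) := Nat.cast_pos.mpr hnpos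
  -- occupancy comparison from typicality
  have hocc : ∀ a, |(occCount x a : ℝ) - (occCount x' a : ℝ)| ≤ 2*(n:ℝ)*δ := by
    intro a
    rcases (hp0 a).lt_or_eq with hpa | hpa
    · have h1 := (hx a).1 hpa
      have h2 := (hx' a).1 hpa
      have e : (occCount x a : ℝ) - (occCount x' a : ℝ)
          = (n:ℝ) * (((occCount x a : ℝ)/n - p a) - ((occCount x' a : ℝ)/n - p a)) := by
        field_simp
        ring
      rw [e, abs_mul, abs_of_pos hncast]
      have : |((occCount x a : ℝ)/n - p a) - ((occCount x' a : ℝ)/n - p a)| ≤ 2*δ := by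
        calc |((occCount x a : ℝ)/n - p a) - ((occCount x' a : ℝ)/n - p a)|
            ≤ |(occCount x a : ℝ)/n - p a| + |(occCount x' a : ℝ)/n - p a| := abs_sub _ _
        _ ≤ 2*δ := by linarith
      have h4 := mul_le_mul_of_nonneg_left this hncast.le
      calc (n:ℝ) * |((occCount x a : ℝ)/n - p a) - ((occCount x' a : ℝ)/n - p a)|
          ≤ (n:ℝ) * (2*δ) := h4
      _ = 2*(n:ℝ)*δ := by ring
    · have h1 := (hx a).2 hpa.symm
      have h2 := (hx' a).2 hpa.symm
      rw [h1, h2]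
      simp
      positivity
  -- the deterministic separation
  have hεc : 0 < c * ε := mul_pos hc_pos hε
  have hγm : γ * m ≤ c*ε/8 := by
    have h1 : γ ≤ c*ε/(8*m) := min_le_left _ _
    have hmpos : (0:ℝ) < m := by linarith
    calc γ * m ≤ (c*ε/(8*m)) * m := mul_le_mul_of_nonneg_right h1 hmpos.le
    _ = c*ε/8 := by field_simp
  have hδm : δ * m ≤ c*ε/8 := by
    have hmpos : (0:ℝ) < m := by linarith
    have h2 : δ * m ≤ (γ/2) * m := mul_le_mul_of_nonneg_right hδγ hmpos.le
    have h3 : (γ/2) * m ≤ (c*ε/8)/2 := by linarith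
    linarith
  obtain ⟨a', b, hD⟩ := det_lemma (Y := Y) W hW0 hW1 hc_pos.le hc_le x x' hnpos hεc hγm hδm hocc hham
  -- notation
  set A : Set (Fin n → Y) := condTypicalSet W δ x with hA
  set B : Set (Fin n → Y) := condTypicalSet W δ x' with hB
  set Q : (Fin n → Y) → ℝ := fun y => ∏ t, W (x t) (y t) with hQ
  have hQ0 : ∀ y, 0 ≤ Q y := fun y => Finset.prod_nonneg fun t _ => hW0 _ _
  set M : ℝ := ∑ t, (if x' t = a' then W (x t) b else 0) with hM
  set Af : Finset (Fin n → Y) := Finset.univ.filter (fun y => y ∈ A) with hAf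
  set ABf : Finset (Fin n → Y) := Finset.univ.filter (fun y => y ∈ A ∩ B) with hABf
  have hAncard : (A.ncard : ℝ) = (Af.card : ℝ) := by
    have : A = (Af : Set (Fin n → Y)) := by
      ext y; simp [hAf]
    rw [this, Set.ncard_coe_finset]
  have hABncard : ((A ∩ B).ncard : ℝ) = (ABf.card : ℝ) := by
    have : A ∩ B = (ABf : Set (Fin n → Y)) := by
      ext y; simp [hABf]
    rw [this, Set.ncard_coe_finset]
  -- F5 : intersection mass is exponentially small
  have hsub : ∀ y ∈ ABf, (n:ℝ)*(γ/2) ≤ |(jointCount x' y a' b : ℝ) - M| := by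
    intro y hy
    rw [hABf, Finset.mem_filter] at hy
    have hyB : y ∈ B := hy.2.2
    have h1 : |(jointCount x' y a' b : ℝ) - (occCount x' a' : ℝ) * W a' b| ≤ (n:ℝ)*δ :=
      typ_count_bound W hnpos hyB a' b
    have h2 : |M - (occCount x' a' : ℝ) * W a' b|
        ≤ |M - (jointCount x' y a' b : ℝ)|
          + |(jointCount x' y a' b : ℝ) - (occCount x' a' : ℝ) * W a' b| := abs_sub_le _ _ _
    have h3 : (n:ℝ)*δ ≤ (n:ℝ)*(γ/2) := mul_le_mul_of_nonneg_left hδγ hncast.le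
    rw [abs_sub_comm]
    linarith [hD, h1, h2, h3]
  have F5 : ∑ y ∈ ABf, Q y ≤ 2 * Real.exp (-(n:ℝ)*(γ/2)^2/2) := by
    have hsubs : ABf ⊆ Finset.univ.filter (fun y : Fin n → Y =>
        (n:ℝ)*(γ/2) ≤ |(jointCount x' y a' b : ℝ) - ∑ t, (if x' t = a' then W (x t) b else 0)|) := by
      intro y hy
      rw [Finset.mem_filter]
      exact ⟨Finset.mem_univ y, by rw [← hM]; exact hsub y hy⟩
    calc ∑ y ∈ ABf, Q y ≤ ∑ y ∈ Finset.univ.filter (fun y : Fin n → Y =>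
        (n:ℝ)*(γ/2) ≤ |(jointCount x' y a' b : ℝ) - ∑ t, (if x' t = a' then W (x t) b else 0)|),
          Q y := Finset.sum_le_sum_of_subset_of_nonneg hsubs (fun y _ _ => hQ0 y)
    _ ≤ 2 * Real.exp (-(n:ℝ)*(γ/2)^2/2) :=
        joint_tail W hW0 hW1 x x' a' b (by positivity) (by linarith)
  -- F4 : typical mass at least 1/2
  have F4 : (1/2 : ℝ) ≤ ∑ y ∈ Af, Q y := by
    have hbase := QA_lower W hW0 hW1 hδ0 hδhalf hnpos x
    have htail : 2*m*k*Real.exp (-(n:ℝ)*δ^2/2) ≤ 1/2 := by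
      have hlog : Real.log (4*m*k) ≤ (n:ℝ)*δ^2/2 := by
        rw [div_le_iff₀ (by positivity : (0:ℝ) < δ^2)] at hnR1
        linarith
      have : Real.exp (-(n:ℝ)*δ^2/2) ≤ (4*m*k)⁻¹ := by
        rw [← Real.exp_log (by positivity : (0:ℝ) < (4*m*k)⁻¹), Real.log_inv]
        apply Real.exp_le_exp.mpr
        linarith
      calc 2*m*k*Real.exp (-(n:ℝ)*δ^2/2) ≤ 2*m*k*(4*m*k)⁻¹ := by
            apply mul_le_mul_of_nonneg_left this (by positivity)
      _ = 1/2 := by field_simp; ring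
    calc (1/2 : ℝ) ≤ 1 - 2*m*k*Real.exp (-(n:ℝ)*δ^2/2) := by linarith
    _ ≤ ∑ y ∈ Af, Q y := hbase
  -- F3 : near-uniformity
  set H : ℝ := ∑ a, ∑ b, (occCount x a : ℝ) * W a b * Real.log (W a b) with hH
  set E1 : ℝ := Real.exp (H - (n:ℝ)*δ*C) with hE1
  set E2 : ℝ := Real.exp (H + (n:ℝ)*δ*C) with hE2
  have hbddlow : ∀ y ∈ ABf, E1 ≤ Q y := by
    intro y hy
    rw [hABf, Finset.mem_filter] at hy
    exact (Q_bounds W hW0 hδ0.le hnpos x y hy.2.1).1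
  have hbddhigh : ∀ y ∈ Af, Q y ≤ E2 := by
    intro y hy
    rw [hAf, Finset.mem_filter] at hy
    exact (Q_bounds W hW0 hδ0.le hnpos x y hy.2).2
  have hlow : (ABf.card : ℝ) * E1 ≤ ∑ y ∈ ABf, Q y := by
    calc (ABf.card : ℝ) * E1 = ∑ _y ∈ ABf, E1 := by rw [Finset.sum_const, nsmul_eq_mul]
    _ ≤ ∑ y ∈ ABf, Q y := Finset.sum_le_sum hbddlow
  have hhigh : ∑ y ∈ Af, Q y ≤ (Af.card : ℝ) * E2 := by
    calc ∑ y ∈ Af, Q y ≤ ∑ _y ∈ Af, E2 := Finset.sum_le_sum hbddhigh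
    _ = (Af.card : ℝ) * E2 := by rw [Finset.sum_const, nsmul_eq_mul]
  -- final numeric comparison
  have hδC2 : 2*δ*C ≤ γ^2/32 := by
    have h641 : (0:ℝ) < 64*(C+1) := by positivity
    rw [le_div_iff₀ h641] at hδC
    linarith [hδC, hδ0.le]
  have final : 4 * Real.exp (-(n:ℝ)*(γ/2)^2/2) * E2 ≤ Real.exp (-(n:ℝ)*L) * E1 := by
    rw [hE1, hE2, mul_assoc, ← Real.exp_add, ← Real.exp_add]
    have h4 : (4:ℝ) = Real.exp (Real.log 4) := (Real.exp_log (by norm_num)).symm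
    rw [h4, ← Real.exp_add]
    apply Real.exp_le_exp.mpr
    have hlog4 : Real.log 4 ≤ (n:ℝ)*γ^2/16 := by
      rw [div_le_iff₀ (by positivity : (0:ℝ) < γ^2)] at hnR2
      linarith
    have hnδC : (n:ℝ)*(2*δ*C) ≤ (n:ℝ)*(γ^2/32) :=
      mul_le_mul_of_nonneg_left hδC2 hncast.le
    rw [hLdef]
    linarith
  -- assemble
  rw [hABncard, hAncard]
  have hE1pos : 0 < E1 := Real.exp_pos _
  have hE2pos : 0 < E2 := Real.exp_pos _
  have hAfpos : (0:ℝ) ≤ (Af.card : ℝ) := Nat.cast_nonneg _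
  have key1 : (ABf.card : ℝ) * E1 ≤ 2 * Real.exp (-(n:ℝ)*(γ/2)^2/2) := le_trans hlow F5
  have key2 : (1:ℝ) ≤ 2 * ((Af.card : ℝ) * E2) := by linarith
  have key3 : (ABf.card : ℝ) * E1
      ≤ (2 * Real.exp (-(n:ℝ)*(γ/2)^2/2)) * (2 * ((Af.card : ℝ) * E2)) := by
    calc (ABf.card : ℝ) * E1 ≤ 2 * Real.exp (-(n:ℝ)*(γ/2)^2/2) := key1
    _ = (2 * Real.exp (-(n:ℝ)*(γ/2)^2/2)) * 1 := (mul_one _).symm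
    _ ≤ (2 * Real.exp (-(n:ℝ)*(γ/2)^2/2)) * (2 * ((Af.card : ℝ) * E2)) :=
        mul_le_mul_of_nonneg_left key2 (by positivity)
  have key4 : (2 * Real.exp (-(n:ℝ)*(γ/2)^2/2)) * (2 * ((Af.card : ℝ) * E2))
      ≤ (Real.exp (-(n:ℝ)*L) * E1) * (Af.card : ℝ) := by
    calc (2 * Real.exp (-(n:ℝ)*(γ/2)^2/2)) * (2 * ((Af.card : ℝ) * E2))
        = (4 * Real.exp (-(n:ℝ)*(γ/2)^2/2) * E2) * (Af.card : ℝ) := by ring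
    _ ≤ (Real.exp (-(n:ℝ)*L) * E1) * (Af.card : ℝ) :=
        mul_le_mul_of_nonneg_right final hAfpos
  have key5 : (ABf.card : ℝ) * E1 ≤ (Real.exp (-(n:ℝ)*L) * (Af.card : ℝ)) * E1 := by
    calc (ABf.card : ℝ) * E1
        ≤ (2 * Real.exp (-(n:ℝ)*(γ/2)^2/2)) * (2 * ((Af.card : ℝ) * E2)) := key3
    _ ≤ (Real.exp (-(n:ℝ)*L) * E1) * (Af.card : ℝ) := key4
    _ = (Real.exp (-(n:ℝ)*L) * (Af.card : ℝ)) * E1 := by ring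
  exact le_of_mul_le_mul_right key5 hE1pos
end
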